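/- Let E ⊂ X be a set of finite perimeter. Let {E_n}_{n=1}^∞ be an increasing sequence of indecomposable sets such that E = ⋃_{n=1}^∞ E_n. Then E is an indecomposable set. -/

import Mathlib

open MeasureTheory Metric Filter Set ENNReal NNReal Topology

/-- A curve: a rectifiable continuous map from a compact interval into `X`,
parametrized by arc length (hence `1`-Lipschitz on `[0, len]`). -/
structure Curve (X : Type*) [MetricSpace X] where
  len : ℝ
  len_nonneg : 0 ≤ len
  toFun : ℝ → X
  lipschitzOn : LipschitzOnWith 1 toFun (Set.Icc 0 len)

namespace Curve

variable {X : Type*} [MetricSpace X]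

/-- A curve is nonconstant if it attains two distinct values. -/
def IsNonconstant (γ : Curve X) : Prop :=
  ∃ s ∈ Set.Icc (0:ℝ) γ.len, ∃ t ∈ Set.Icc (0:ℝ) γ.len, γ.toFun s ≠ γ.toFun t

/-- A curve lies in a set `W`. -/
def IsIn (γ : Curve X) (W : Set X) : Prop :=
  ∀ s ∈ Set.Icc (0:ℝ) γ.len, γ.toFun s ∈ W

end Curve

variable {X : Type*} [MetricSpace X] [MeasurableSpace X] [BorelSpace X]

/-- The curve integral `∫_γ g ds` for an arc-length parametrized curve. -/
noncomputable def curveLintegral (g : X → ℝ≥0∞) (γ : Curve X) : ℝ≥0∞ :=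
  ∫⁻ s in Set.Icc (0:ℝ) γ.len, g (γ.toFun s)

/-- The upper gradient inequality `|u(x) - u(y)| ≤ ∫_γ g ds` along a curve `γ`
with endpoints `x, y`. -/
def UpperGradIneq (g : X → ℝ≥0∞) (u : X → ℝ) (γ : Curve X) : Prop :=
  ENNReal.ofReal |u (γ.toFun 0) - u (γ.toFun γ.len)| ≤ curveLintegral g γ

/-- The 1-modulus of a family of curves. -/
noncomputable def mod1 (μ : Measure X) (Γ : Set (Curve X)) : ℝ≥0∞ :=
  ⨅ (ρ : X → ℝ≥0∞) (_ : Measurable ρ ∧ ∀ γ ∈ Γ, 1 ≤ curveLintegral ρ γ),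
    ∫⁻ x, ρ x ∂μ

/-- `g` is a 1-weak upper gradient of `u` in `W`: the upper gradient inequality
holds for all nonconstant curves in `W` outside a family of 1-modulus zero. -/
def IsWeakUpperGradientOn (μ : Measure X) (g : X → ℝ≥0∞) (u : X → ℝ) (W : Set X) : Prop :=
  Measurable g ∧
    mod1 μ {γ : Curve X | γ.IsNonconstant ∧ γ.IsIn W ∧ ¬ UpperGradIneq g u γ} = 0

/-- `g` is a (strong) upper gradient of `u` in `X`. -/
def IsUpperGradient (g : X → ℝ≥0∞) (u : X → ℝ) : Prop :=
  Measurable g ∧ ∀ γ : Curve X, γ.IsNonconstant → UpperGradIneq g u γ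

/-- `∫_W g_u dμ`: the integral over `W` of the minimal 1-weak upper gradient of `u`
in `W`, equivalently the infimum of `∫_W g dμ` over all 1-weak upper gradients `g`
of `u` in `W`. -/
noncomputable def gradEnergy (μ : Measure X) (u : X → ℝ) (W : Set X) : ℝ≥0∞ :=
  ⨅ (g : X → ℝ≥0∞) (_ : IsWeakUpperGradientOn μ g u W), ∫⁻ x in W, g x ∂μ

/-- `u` is locally Lipschitz on `W`. -/
def LocLipschitzOn (u : X → ℝ) (W : Set X) : Prop :=
  ∀ x ∈ W, ∃ K : ℝ≥0, ∃ t ∈ nhdsWithin x W, LipschitzOnWith K u t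

/-- Convergence `uᵢ → v` in `L¹_loc(W)`. -/
def TendstoL1loc (μ : Measure X) (W : Set X) (u : ℕ → X → ℝ) (v : X → ℝ) : Prop :=
  ∀ W' : Set X, IsOpen W' → IsCompact (closure W') → closure W' ⊆ W →
    Tendsto (fun i => ∫⁻ x in W', ENNReal.ofReal |u i x - v x| ∂μ) atTop (𝓝 0)

/-- The total variation `‖Dv‖(W)` of a function `v` in an open set `W`. -/
noncomputable def variationOn (μ : Measure X) (v : X → ℝ) (W : Set X) : ℝ≥0∞ :=
  ⨅ (u : ℕ → X → ℝ) (_ : (∀ i, LocLipschitzOn (u i) W) ∧ TendstoL1loc μ W u v),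
    Filter.liminf (fun i => gradEnergy μ (u i) W) Filter.atTop

/-- The total variation `‖Dv‖(A)` of a function `v` in an arbitrary set `A`. -/
noncomputable def totalVar (μ : Measure X) (v : X → ℝ) (A : Set X) : ℝ≥0∞ :=
  ⨅ (W : Set X) (_ : IsOpen W ∧ A ⊆ W), variationOn μ v W

/-- The perimeter `P(E, A) = ‖Dχ_E‖(A)`. -/
noncomputable def perimeter (μ : Measure X) (E A : Set X) : ℝ≥0∞ :=
  totalVar μ (Set.indicator E fun _ => (1 : ℝ)) A

/-- The measure `μ` is doubling. -/
def IsDoublingMeasure (μ : Measure X) : Prop :=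
  ∃ C : ℝ≥0∞, 1 ≤ C ∧ ∀ (x : X) (r : ℝ), 0 < r → μ (ball x (2 * r)) ≤ C * μ (ball x r)

/-- The space supports a (1,1)-Poincaré inequality:
`⨍_{B(x,r)} |u - u_{B(x,r)}| dμ ≤ C r ⨍_{B(x,λr)} g dμ` for every ball, every
`u ∈ L¹_loc(X)` and every upper gradient `g` of `u` (stated here multiplied
through by the measures of the two balls). -/
def SupportsPoincare (μ : Measure X) : Prop :=
  ∃ C lam : ℝ, 0 < C ∧ 1 ≤ lam ∧
    ∀ (x : X) (r : ℝ), 0 < r → ∀ (u : X → ℝ) (g : X → ℝ≥0∞),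
      (∀ (y : X) (s : ℝ), IntegrableOn u (ball y s) μ) → IsUpperGradient g u →
        μ (ball x (lam * r)) *
            ∫⁻ y in ball x r, ENNReal.ofReal |u y - ⨍ z in ball x r, u z ∂μ| ∂μ ≤
          ENNReal.ofReal (C * r) * μ (ball x r) * ∫⁻ y in ball x (lam * r), g y ∂μ

/-- `(X, d, μ)` is a PI space: complete, doubling, supporting a (1,1)-Poincaré
inequality. -/
def IsPISpace (μ : Measure X) : Prop :=
  CompleteSpace X ∧ IsDoublingMeasure μ ∧ SupportsPoincare μ

/-- A set `E` of finite perimeter is decomposable in a Borel set `D` if there is a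
partition `{F, G}` of `E ∩ D` into sets of finite perimeter in `D`, both of positive
measure, with `P(E,D) = P(F,D) + P(G,D)`. -/
def IsDecomposableIn (μ : Measure X) (E D : Set X) : Prop :=
  ∃ F G : Set X, MeasurableSet F ∧ MeasurableSet G ∧ Disjoint F G ∧ F ∪ G = E ∩ D ∧
    perimeter μ F D < ⊤ ∧ perimeter μ G D < ⊤ ∧ 0 < μ F ∧ 0 < μ G ∧
    perimeter μ E D = perimeter μ F D + perimeter μ G D

/-- `E` is indecomposable in `D`. -/
def IsIndecomposableIn (μ : Measure X) (E D : Set X) : Prop :=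
  ¬ IsDecomposableIn μ E D

/-- `{F i}_{i ∈ I}` is a (finite or countable) partition of `E` into indecomposable
Borel sets of positive measure and finite perimeter whose perimeters sum to `P(E,X)`;
this is the defining property of the essential connected components `𝒞𝒞ᵉ(E)`. -/
def IsEssentialPartition (μ : Measure X) (E : Set X) (I : Set ℕ) (F : ℕ → Set X) : Prop :=
  (∀ i ∈ I, MeasurableSet (F i)) ∧
  (∀ i ∈ I, ∀ j ∈ I, i ≠ j → Disjoint (F i) (F j)) ∧
  (⋃ i ∈ I, F i) = E ∧
  (∀ i ∈ I, 0 < μ (F i)) ∧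
  (∀ i ∈ I, perimeter μ (F i) Set.univ < ⊤) ∧
  (∀ i ∈ I, IsIndecomposableIn μ (F i) Set.univ) ∧
  perimeter μ E Set.univ = ∑' i : I, perimeter μ (F i.1) Set.univ

/-- Given a decomposition `{G i}_{i ∈ I}` of `X ∖ E` into essential connected
components, the saturation of `E`: the union of `E` and its holes, i.e. the
components of finite measure. -/
def saturationOf (μ : Measure X) (E : Set X) (I : Set ℕ) (G : ℕ → Set X) : Set X :=
  E ∪ ⋃ (i : ℕ) (_ : i ∈ I ∧ μ (G i) < ⊤), G i

/-- The measure-theoretic boundary `∂* E`: points where both `E` and its complement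
have strictly positive upper density. -/
def mtBoundary (μ : Measure X) (E : Set X) : Set X :=
  {x : X |
    0 < Filter.limsup (fun r => μ (ball x r ∩ E) / μ (ball x r)) (nhdsWithin 0 (Set.Ioi 0)) ∧
    0 < Filter.limsup (fun r => μ (ball x r \ E) / μ (ball x r)) (nhdsWithin 0 (Set.Ioi 0))}

/-- The restricted codimension-one Hausdorff content `ℋ_R`. -/
noncomputable def codimOneContent (μ : Measure X) (R : ℝ) (A : Set X) : ℝ≥0∞ :=
  ⨅ (s : Set (X × ℝ))
    (_ : s.Countable ∧ (∀ p ∈ s, 0 < p.2 ∧ p.2 ≤ R) ∧ A ⊆ ⋃ p ∈ s, ball p.1 p.2),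
    ∑' p : s, μ (ball (p : X × ℝ).1 (p : X × ℝ).2) / ENNReal.ofReal (p : X × ℝ).2

/-- The codimension-one Hausdorff measure `ℋ(A) = lim_{R → 0} ℋ_R(A)`. -/
noncomputable def codimOneHausdorff (μ : Measure X) (A : Set X) : ℝ≥0∞ :=
  ⨆ (R : ℝ) (_ : 0 < R), codimOneContent μ R A


/-! ### Auxiliary development -/

section Aux

open MeasureTheory

lemma Curve.len_pos_of_isNonconstant {γ : Curve X} (h : γ.IsNonconstant) : 0 < γ.len := by
  rcases h with ⟨s, hs, t, ht, hne⟩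
  rcases lt_or_eq_of_le γ.len_nonneg with h' | h'
  · exact h'
  · exfalso
    have hs0 : s = 0 := le_antisymm (by simpa [← h'] using hs.2) hs.1
    have ht0 : t = 0 := le_antisymm (by simpa [← h'] using ht.2) ht.1
    exact hne (by rw [hs0, ht0])

lemma Curve.const_endpoints {γ : Curve X} (h : ¬ γ.IsNonconstant) :
    γ.toFun 0 = γ.toFun γ.len := by
  by_contra hne
  exact h ⟨0, ⟨le_rfl, γ.len_nonneg⟩, γ.len, ⟨γ.len_nonneg, le_rfl⟩, hne⟩

/-- The subcurve of `γ` between times `a` and `b`. -/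
noncomputable def Curve.subcurve (γ : Curve X) (a b : ℝ) (h0 : 0 ≤ a) (hab : a ≤ b)
    (hb : b ≤ γ.len) : Curve X where
  len := b - a
  len_nonneg := sub_nonneg.mpr hab
  toFun := fun s => γ.toFun (s + a)
  lipschitzOn := by
    intro s hs t ht
    have hs' : s + a ∈ Set.Icc 0 γ.len :=
      ⟨by have := hs.1; linarith, by have := hs.2; linarith⟩
    have ht' : t + a ∈ Set.Icc 0 γ.len :=
      ⟨by have := ht.1; linarith, by have := ht.2; linarith⟩
    calc edist (γ.toFun (s + a)) (γ.toFun (t + a)) ≤ 1 * edist (s + a) (t + a) :=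
          γ.lipschitzOn hs' ht'
      _ = 1 * edist s t := by rw [edist_add_right]

@[simp] lemma Curve.subcurve_start (γ : Curve X) (a b : ℝ) (h0 : 0 ≤ a) (hab : a ≤ b)
    (hb : b ≤ γ.len) : (γ.subcurve a b h0 hab hb).toFun 0 = γ.toFun a := by
  simp [Curve.subcurve]

@[simp] lemma Curve.subcurve_end (γ : Curve X) (a b : ℝ) (h0 : 0 ≤ a) (hab : a ≤ b)
    (hb : b ≤ γ.len) :
    (γ.subcurve a b h0 hab hb).toFun (γ.subcurve a b h0 hab hb).len = γ.toFun b := by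
  simp [Curve.subcurve]

lemma lintegral_comp_add_right (F : ℝ → ℝ≥0∞) (a : ℝ) :
    ∫⁻ s, F (s + a) = ∫⁻ s, F s := by
  have h := lintegral_map_equiv (μ := volume) F (MeasurableEquiv.addRight a)
  have hcoe : ⇑(MeasurableEquiv.addRight a) = fun x : ℝ => x + a :=
    MeasurableEquiv.coe_addRight a
  rw [hcoe, map_add_right_eq_self volume a] at h
  exact h.symm

lemma lintegral_Icc_comp_add_right (F : ℝ → ℝ≥0∞) (a c d : ℝ) :
    ∫⁻ s in Set.Icc c d, F (s + a) = ∫⁻ s in Set.Icc (c + a) (d + a), F s := by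
  rw [← lintegral_indicator measurableSet_Icc, ← lintegral_indicator measurableSet_Icc]
  have heq : (Set.Icc c d).indicator (fun s => F (s + a))
      = fun s => (Set.Icc (c + a) (d + a)).indicator F (s + a) := by
    funext s
    by_cases hs : s ∈ Set.Icc c d
    · rw [Set.indicator_of_mem hs,
        Set.indicator_of_mem (show s + a ∈ Set.Icc (c + a) (d + a) from
          ⟨by linarith [hs.1], by linarith [hs.2]⟩)]
    · rw [Set.indicator_of_notMem hs,
        Set.indicator_of_notMem (show s + a ∉ Set.Icc (c + a) (d + a) from fun hmem =>
          hs ⟨by linarith [hmem.1], by linarith [hmem.2]⟩)]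
  rw [heq]
  exact lintegral_comp_add_right ((Set.Icc (c + a) (d + a)).indicator F) a

lemma curveLintegral_subcurve (g : X → ℝ≥0∞) (γ : Curve X) (a b : ℝ) (h0 : 0 ≤ a)
    (hab : a ≤ b) (hb : b ≤ γ.len) :
    curveLintegral g (γ.subcurve a b h0 hab hb) = ∫⁻ s in Set.Icc a b, g (γ.toFun s) := by
  show ∫⁻ s in Set.Icc (0:ℝ) (b - a), (fun t => g (γ.toFun t)) (s + a) = _
  rw [lintegral_Icc_comp_add_right (fun t => g (γ.toFun t)) a 0 (b - a)]
  norm_num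

/-- A pointwise increment bound along a subcurve, for curves all of whose subcurves
satisfy the upper gradient inequality. -/
lemma mod1_mono' (μ : Measure X) {Γ₁ Γ₂ : Set (Curve X)} (h : Γ₁ ⊆ Γ₂) :
    mod1 μ Γ₁ ≤ mod1 μ Γ₂ := by
  refine le_iInf fun ρ => le_iInf fun hρ => ?_
  exact iInf_le_of_le ρ (iInf_le_of_le ⟨hρ.1, fun γ hγ => hρ.2 γ (h hγ)⟩ le_rfl)

lemma exists_admissible_of_mod1_lt {μ : Measure X} {Γ : Set (Curve X)} {c : ℝ≥0∞}
    (h : mod1 μ Γ < c) :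
    ∃ ρ : X → ℝ≥0∞, (Measurable ρ ∧ ∀ γ ∈ Γ, 1 ≤ curveLintegral ρ γ) ∧ ∫⁻ x, ρ x ∂μ < c := by
  rw [mod1] at h
  obtain ⟨ρ, hρ⟩ := iInf_lt_iff.mp h
  obtain ⟨hc, hv⟩ := iInf_lt_iff.mp hρ
  exact ⟨ρ, hc, hv⟩

lemma mod1_union_null {μ : Measure X} {Γ₁ Γ₂ : Set (Curve X)} (h₁ : mod1 μ Γ₁ = 0)
    (h₂ : mod1 μ Γ₂ = 0) : mod1 μ (Γ₁ ∪ Γ₂) = 0 := by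
  refine le_antisymm (ENNReal.le_of_forall_pos_le_add fun ε hε _ => ?_) (zero_le)
  have hε2 : (0:ℝ≥0∞) < (ε : ℝ≥0∞) / 2 := by
    simp [ENNReal.div_pos_iff, hε.ne']
  obtain ⟨ρ₁, hρ₁, hv₁⟩ := exists_admissible_of_mod1_lt (h₁ ▸ hε2 : mod1 μ Γ₁ < (ε:ℝ≥0∞)/2)
  obtain ⟨ρ₂, hρ₂, hv₂⟩ := exists_admissible_of_mod1_lt (h₂ ▸ hε2 : mod1 μ Γ₂ < (ε:ℝ≥0∞)/2)
  have hadm : ∀ γ ∈ Γ₁ ∪ Γ₂, 1 ≤ curveLintegral (fun x => ρ₁ x + ρ₂ x) γ := by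
    rintro γ (hγ | hγ)
    · exact le_trans (hρ₁.2 γ hγ) (lintegral_mono fun s => le_self_add)
    · exact le_trans (hρ₂.2 γ hγ) (lintegral_mono fun s => le_add_self)
  have : mod1 μ (Γ₁ ∪ Γ₂) ≤ ∫⁻ x, (ρ₁ x + ρ₂ x) ∂μ :=
    iInf_le_of_le _ (iInf_le_of_le ⟨hρ₁.1.add hρ₂.1, hadm⟩ le_rfl)
  refine this.trans ?_
  rw [lintegral_add_left hρ₁.1]
  calc ∫⁻ x, ρ₁ x ∂μ + ∫⁻ x, ρ₂ x ∂μ ≤ (ε:ℝ≥0∞)/2 + (ε:ℝ≥0∞)/2 :=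
        add_le_add hv₁.le hv₂.le
    _ = (ε:ℝ≥0∞) := ENNReal.add_halves _
    _ ≤ 0 + (ε:ℝ≥0∞) := by simp

/-- The family of curves having a subcurve in `Γ`. -/
def subBadFam (Γ : Set (Curve X)) : Set (Curve X) :=
  {γ : Curve X | ∃ a b, ∃ h0 : 0 ≤ a, ∃ hab : a ≤ b, ∃ hb : b ≤ γ.len,
    γ.subcurve a b h0 hab hb ∈ Γ}

lemma mod1_subBadFam_le (μ : Measure X) (Γ : Set (Curve X)) :
    mod1 μ (subBadFam Γ) ≤ mod1 μ Γ := by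
  refine le_iInf fun ρ => le_iInf fun hρ => ?_
  refine iInf_le_of_le ρ (iInf_le_of_le ⟨hρ.1, fun γ hγ => ?_⟩ le_rfl)
  obtain ⟨a, b, h0, hab, hb, hmem⟩ := hγ
  calc (1:ℝ≥0∞) ≤ curveLintegral ρ (γ.subcurve a b h0 hab hb) := hρ.2 _ hmem
    _ = ∫⁻ s in Set.Icc a b, ρ (γ.toFun s) := curveLintegral_subcurve ρ γ a b h0 hab hb
    _ ≤ ∫⁻ s in Set.Icc 0 γ.len, ρ (γ.toFun s) :=
        lintegral_mono' (Measure.restrict_mono (Set.Icc_subset_Icc h0 hb) le_rfl) le_rfl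

lemma mod1_null_of_lintegral_ne_top {μ : Measure X} {ρ₀ : X → ℝ≥0∞} (hm : Measurable ρ₀)
    (hfin : ∫⁻ x, ρ₀ x ∂μ ≠ ⊤) :
    mod1 μ {γ : Curve X | curveLintegral ρ₀ γ = ⊤} = 0 := by
  refine le_antisymm (ENNReal.le_of_forall_pos_le_add fun ε hε _ => ?_) (zero_le)
  set I := ∫⁻ x, ρ₀ x ∂μ with hI
  set c : ℝ≥0∞ := (ε : ℝ≥0∞) / (I + 1) with hc
  have hc0 : c ≠ 0 := by
    simp only [hc, ne_eq, ENNReal.div_eq_zero_iff]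
    push_neg
    exact ⟨by exact_mod_cast hε.ne', by simp [hfin]⟩
  have hcle : c ≤ (ε : ℝ≥0∞) :=
    ENNReal.div_le_of_le_mul (le_mul_of_one_le_right (zero_le) le_add_self)
  have hctop : c ≠ ⊤ := (lt_of_le_of_lt hcle ENNReal.coe_lt_top).ne
  have hadm : ∀ γ ∈ {γ : Curve X | curveLintegral ρ₀ γ = ⊤},
      1 ≤ curveLintegral (fun x => c * ρ₀ x) γ := by
    intro γ hγ
    have : curveLintegral (fun x => c * ρ₀ x) γ = c * curveLintegral ρ₀ γ :=
      lintegral_const_mul' c _ hctop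
    rw [this, hγ, ENNReal.mul_top hc0]
    exact le_top
  have hle : mod1 μ {γ : Curve X | curveLintegral ρ₀ γ = ⊤} ≤ ∫⁻ x, c * ρ₀ x ∂μ :=
    iInf_le_of_le _ (iInf_le_of_le ⟨hm.const_mul c, hadm⟩ le_rfl)
  refine hle.trans ?_
  rw [lintegral_const_mul' c _ hctop, ← hI]
  calc c * I ≤ c * (I + 1) := by gcongr; exact le_self_add
    _ = (ε : ℝ≥0∞) := by
        rw [hc]
        exact ENNReal.div_mul_cancel (by simp) (by simp [hfin])
    _ ≤ 0 + (ε : ℝ≥0∞) := by simp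

end Aux


section Aux2

open MeasureTheory

lemma abs_min_sub_min_le_add (a b c d : ℝ) : |min a b - min c d| ≤ |a - c| + |b - d| :=
  (abs_min_sub_min_le_max a b c d).trans
    (max_le (le_add_of_nonneg_right (abs_nonneg _)) (le_add_of_nonneg_left (abs_nonneg _)))

lemma abs_max_sub_max_le_add (a b c d : ℝ) : |max a b - max c d| ≤ |a - c| + |b - d| :=
  (abs_max_sub_max_le_max a b c d).trans
    (max_le (le_add_of_nonneg_right (abs_nonneg _)) (le_add_of_nonneg_left (abs_nonneg _)))

lemma LocLipschitzOn.continuous' {u : X → ℝ} (h : LocLipschitzOn u Set.univ) :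
    Continuous u := by
  rw [continuous_iff_continuousAt]
  intro x
  obtain ⟨K, t, ht, hl⟩ := h x (Set.mem_univ x)
  rw [nhdsWithin_univ] at ht
  exact hl.continuousOn.continuousAt ht

lemma locLip_of_comb {u v w : X → ℝ}
    (hcomb : ∀ x y, |w x - w y| ≤ |u x - u y| + |v x - v y|)
    (hu : LocLipschitzOn u Set.univ) (hv : LocLipschitzOn v Set.univ) :
    LocLipschitzOn w Set.univ := by
  intro x hx
  obtain ⟨K₁, t₁, ht₁, h₁⟩ := hu x hx
  obtain ⟨K₂, t₂, ht₂, h₂⟩ := hv x hx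
  refine ⟨K₁ + K₂, t₁ ∩ t₂, Filter.inter_mem ht₁ ht₂, ?_⟩
  rw [lipschitzOnWith_iff_dist_le_mul] at h₁ h₂ ⊢
  intro a ha b hb
  have e1 := h₁ a ha.1 b hb.1
  have e2 := h₂ a ha.2 b hb.2
  have e3 := hcomb a b
  rw [Real.dist_eq] at e1 e2 ⊢
  push_cast
  linarith

lemma locLip_add {u v : X → ℝ} (hu : LocLipschitzOn u Set.univ)
    (hv : LocLipschitzOn v Set.univ) : LocLipschitzOn (fun x => u x + v x) Set.univ :=
  locLip_of_comb (fun x y => by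
    have : u x + v x - (u y + v y) = (u x - u y) + (v x - v y) := by ring
    rw [this]; exact abs_add_le _ _) hu hv

lemma locLip_min {u v : X → ℝ} (hu : LocLipschitzOn u Set.univ)
    (hv : LocLipschitzOn v Set.univ) : LocLipschitzOn (fun x => min (u x) (v x)) Set.univ :=
  locLip_of_comb (fun x y => abs_min_sub_min_le_add _ _ _ _) hu hv

lemma locLip_max {u v : X → ℝ} (hu : LocLipschitzOn u Set.univ)
    (hv : LocLipschitzOn v Set.univ) : LocLipschitzOn (fun x => max (u x) (v x)) Set.univ :=
  locLip_of_comb (fun x y => abs_max_sub_max_le_add _ _ _ _) hu hv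

lemma locLip_const (c : ℝ) : LocLipschitzOn (fun _ : X => c) Set.univ := by
  intro x hx
  exact ⟨0, Set.univ, by simp [nhdsWithin_univ], by
    intro a _ b _
    simp⟩

lemma locLip_add_const {u : X → ℝ} (hu : LocLipschitzOn u Set.univ) (c : ℝ) :
    LocLipschitzOn (fun x => u x + c) Set.univ :=
  locLip_add hu (locLip_const c)

lemma isWUG_congr_abs {μ : Measure X} {u v : X → ℝ} {g : X → ℝ≥0∞}
    (huv : ∀ x y, |v x - v y| = |u x - u y|)
    (hg : IsWeakUpperGradientOn μ g u Set.univ) : IsWeakUpperGradientOn μ g v Set.univ := by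
  refine ⟨hg.1, ?_⟩
  have hset : {γ : Curve X | γ.IsNonconstant ∧ γ.IsIn Set.univ ∧ ¬ UpperGradIneq g v γ}
      = {γ : Curve X | γ.IsNonconstant ∧ γ.IsIn Set.univ ∧ ¬ UpperGradIneq g u γ} := by
    ext γ
    simp only [Set.mem_setOf_eq]
    unfold UpperGradIneq
    rw [huv]
  rw [hset]
  exact hg.2

lemma isWUG_add {μ : Measure X} {u v : X → ℝ} {g h : X → ℝ≥0∞}
    (hg : IsWeakUpperGradientOn μ g u Set.univ) (hh : IsWeakUpperGradientOn μ h v Set.univ) :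
    IsWeakUpperGradientOn μ (fun x => g x + h x) (fun x => u x + v x) Set.univ := by
  refine ⟨hg.1.add hh.1, le_antisymm ?_ (zero_le)⟩
  refine le_trans (le_trans (mod1_mono' μ ?_) (mod1_union_null hg.2 hh.2).le) le_rfl
  rintro γ ⟨hnc, hin, hbad⟩
  by_contra hmem
  simp only [Set.mem_union, Set.mem_setOf_eq, not_or, not_and, not_not] at hmem
  have Ig : UpperGradIneq g u γ := hmem.1 hnc hin
  have Ih : UpperGradIneq h v γ := hmem.2 hnc hin
  refine hbad ?_
  unfold UpperGradIneq at Ig Ih ⊢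
  have heq : u (γ.toFun 0) + v (γ.toFun 0) - (u (γ.toFun γ.len) + v (γ.toFun γ.len))
      = (u (γ.toFun 0) - u (γ.toFun γ.len)) + (v (γ.toFun 0) - v (γ.toFun γ.len)) := by ring
  calc ENNReal.ofReal |u (γ.toFun 0) + v (γ.toFun 0) - (u (γ.toFun γ.len) + v (γ.toFun γ.len))|
      ≤ ENNReal.ofReal (|u (γ.toFun 0) - u (γ.toFun γ.len)| + |v (γ.toFun 0) - v (γ.toFun γ.len)|) := by
        rw [heq]; exact ENNReal.ofReal_le_ofReal (abs_add_le _ _)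
    _ ≤ ENNReal.ofReal |u (γ.toFun 0) - u (γ.toFun γ.len)|
        + ENNReal.ofReal |v (γ.toFun 0) - v (γ.toFun γ.len)| := ENNReal.ofReal_add_le
    _ ≤ curveLintegral g γ + curveLintegral h γ := add_le_add Ig Ih
    _ ≤ curveLintegral (fun x => g x + h x) γ := le_lintegral_add _ _

lemma gradEnergy_le_of_wug {μ : Measure X} {u : X → ℝ} {g : X → ℝ≥0∞}
    (hg : IsWeakUpperGradientOn μ g u Set.univ) :
    gradEnergy μ u Set.univ ≤ ∫⁻ x, g x ∂μ := by
  refine iInf_le_of_le g (iInf_le_of_le hg ?_)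
  rw [Measure.restrict_univ]

lemma exists_wug_lt {μ : Measure X} {u : X → ℝ} {c : ℝ≥0∞}
    (h : gradEnergy μ u Set.univ < c) :
    ∃ g, IsWeakUpperGradientOn μ g u Set.univ ∧ ∫⁻ x, g x ∂μ < c := by
  rw [gradEnergy] at h
  obtain ⟨g, hg⟩ := iInf_lt_iff.mp h
  obtain ⟨h1, h2⟩ := iInf_lt_iff.mp hg
  refine ⟨g, h1, ?_⟩
  rwa [Measure.restrict_univ] at h2

lemma gradEnergy_congr_abs {μ : Measure X} {u v : X → ℝ}
    (huv : ∀ x y, |v x - v y| = |u x - u y|) :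
    gradEnergy μ v Set.univ = gradEnergy μ u Set.univ := by
  have h1 : ∀ x y, |u x - u y| = |v x - v y| := fun x y => (huv x y).symm
  refine le_antisymm ?_ ?_ <;>
    exact le_iInf fun g => le_iInf fun hg =>
      iInf_le_of_le g (iInf_le_of_le (isWUG_congr_abs (by first | exact huv | exact h1) hg) le_rfl)

lemma gradEnergy_add_const (μ : Measure X) (u : X → ℝ) (c : ℝ) :
    gradEnergy μ (fun x => u x + c) Set.univ = gradEnergy μ u Set.univ :=
  gradEnergy_congr_abs (fun x y => by rw [add_sub_add_right_eq_sub])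

lemma gradEnergy_neg (μ : Measure X) (u : X → ℝ) :
    gradEnergy μ (fun x => -u x) Set.univ = gradEnergy μ u Set.univ :=
  gradEnergy_congr_abs (fun x y => by rw [neg_sub_neg, abs_sub_comm])

lemma gradEnergy_add_le (μ : Measure X) (u v : X → ℝ) :
    gradEnergy μ (fun x => u x + v x) Set.univ
      ≤ gradEnergy μ u Set.univ + gradEnergy μ v Set.univ := by
  refine ENNReal.le_of_forall_pos_le_add fun ε hε hlt => ?_
  have hEu : gradEnergy μ u Set.univ ≠ ⊤ := fun h => by simp [h] at hlt
  have hEv : gradEnergy μ v Set.univ ≠ ⊤ := fun h => by simp [h] at hlt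
  have hε2 : ((ε : ℝ≥0∞) / 2) ≠ 0 := by simp [hε.ne']
  obtain ⟨g, hg, hgv⟩ := exists_wug_lt (ENNReal.lt_add_right hEu hε2)
  obtain ⟨h, hh, hhv⟩ := exists_wug_lt (ENNReal.lt_add_right hEv hε2)
  calc gradEnergy μ (fun x => u x + v x) Set.univ
      ≤ ∫⁻ x, (g x + h x) ∂μ := gradEnergy_le_of_wug (isWUG_add hg hh)
    _ = ∫⁻ x, g x ∂μ + ∫⁻ x, h x ∂μ := lintegral_add_left hg.1 _
    _ ≤ (gradEnergy μ u Set.univ + (ε:ℝ≥0∞)/2) + (gradEnergy μ v Set.univ + (ε:ℝ≥0∞)/2) :=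
        add_le_add hgv.le hhv.le
    _ = gradEnergy μ u Set.univ + gradEnergy μ v Set.univ + (ε:ℝ≥0∞) := by
        rw [add_add_add_comm, ENNReal.add_halves]

end Aux2


section Aux3

open MeasureTheory

/-- Core locality lemma: if `g`, `h` are weak upper gradients of `f`, `e` with
`∫ (g+h) dμ < ∞`, then the function equal to `g` on `{f < e}`, to `h` on `{e < f}` and to
`⊤` on `{f = e}` is a weak upper gradient of `min f e`. -/
lemma isWUG_min {μ : Measure X} (f e : X → ℝ) (hf : Continuous f) (he : Continuous e)
    {g h : X → ℝ≥0∞} (hg : IsWeakUpperGradientOn μ g f Set.univ)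
    (hh : IsWeakUpperGradientOn μ h e Set.univ)
    (hfin : ∫⁻ x, (g x + h x) ∂μ ≠ ⊤) :
    IsWeakUpperGradientOn μ
      (fun x => if f x < e x then g x else if e x < f x then h x else ⊤)
      (fun x => min (f x) (e x)) Set.univ := by
  classical
  set G : X → ℝ≥0∞ := fun x => if f x < e x then g x else if e x < f x then h x else ⊤
    with hGdef
  have hGmeas : Measurable G :=
    Measurable.ite (measurableSet_lt hf.measurable he.measurable) hg.1
      (Measurable.ite (measurableSet_lt he.measurable hf.measurable) hh.1 measurable_const)
  refine ⟨hGmeas, le_antisymm ?_ (zero_le)⟩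
  have hN : mod1 μ
      (subBadFam {γ' : Curve X | γ'.IsNonconstant ∧ γ'.IsIn Set.univ ∧ ¬ UpperGradIneq g f γ'}
        ∪ (subBadFam {γ' : Curve X | γ'.IsNonconstant ∧ γ'.IsIn Set.univ ∧ ¬ UpperGradIneq h e γ'}
          ∪ {γ' : Curve X | curveLintegral (fun x => g x + h x) γ' = ⊤})) = 0 := by
    refine mod1_union_null (le_antisymm ((mod1_subBadFam_le μ _).trans hg.2.le) (zero_le))
      (mod1_union_null (le_antisymm ((mod1_subBadFam_le μ _).trans hh.2.le) (zero_le))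
        (mod1_null_of_lintegral_ne_top (hg.1.add hh.1) hfin))
  refine le_trans (mod1_mono' μ ?_) hN.le
  rintro γ ⟨hnc, -, hbad⟩
  by_contra hmem
  simp only [Set.mem_union, not_or] at hmem
  obtain ⟨hm1, hm2, hm3⟩ := hmem
  apply hbad
  unfold UpperGradIneq
  set L := γ.len with hLdef
  have hL0 : 0 ≤ L := γ.len_nonneg
  -- subcurve upper-gradient inequalities
  have key : ∀ (u : X → ℝ) (ρ : X → ℝ≥0∞),
      γ ∉ subBadFam {γ' : Curve X | γ'.IsNonconstant ∧ γ'.IsIn Set.univ ∧ ¬ UpperGradIneq ρ u γ'} →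
      ∀ a b, 0 ≤ a → a ≤ b → b ≤ L →
      ENNReal.ofReal |u (γ.toFun a) - u (γ.toFun b)| ≤ ∫⁻ s in Set.Icc a b, ρ (γ.toFun s) := by
    intro u ρ hnotin a b h0 hab hb
    by_cases hncs : (γ.subcurve a b h0 hab hb).IsNonconstant
    · have hmem' : γ.subcurve a b h0 hab hb ∉
          {γ' : Curve X | γ'.IsNonconstant ∧ γ'.IsIn Set.univ ∧ ¬ UpperGradIneq ρ u γ'} :=
        fun hx => hnotin ⟨a, b, h0, hab, hb, hx⟩
      have hineq : UpperGradIneq ρ u (γ.subcurve a b h0 hab hb) := by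
        by_contra hno
        exact hmem' ⟨hncs, fun s _ => Set.mem_univ _, hno⟩
      unfold UpperGradIneq at hineq
      rw [Curve.subcurve_start, Curve.subcurve_end, curveLintegral_subcurve] at hineq
      exact hineq
    · have hconst := Curve.const_endpoints hncs
      rw [Curve.subcurve_start, Curve.subcurve_end] at hconst
      rw [hconst]
      simp
  have key_f := key f g hm1
  have key_e := key e h hm2
  -- combined increment bound
  have key_m : ∀ a b, 0 ≤ a → a ≤ b → b ≤ L →
      ENNReal.ofReal |min (f (γ.toFun a)) (e (γ.toFun a)) - min (f (γ.toFun b)) (e (γ.toFun b))|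
        ≤ ∫⁻ s in Set.Icc a b, (g (γ.toFun s) + h (γ.toFun s)) := by
    intro a b h0 hab hb
    calc ENNReal.ofReal |min (f (γ.toFun a)) (e (γ.toFun a)) - min (f (γ.toFun b)) (e (γ.toFun b))|
        ≤ ENNReal.ofReal (|f (γ.toFun a) - f (γ.toFun b)| + |e (γ.toFun a) - e (γ.toFun b)|) :=
          ENNReal.ofReal_le_ofReal (abs_min_sub_min_le_add _ _ _ _)
      _ ≤ ENNReal.ofReal |f (γ.toFun a) - f (γ.toFun b)|
          + ENNReal.ofReal |e (γ.toFun a) - e (γ.toFun b)| := ENNReal.ofReal_add_le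
      _ ≤ (∫⁻ s in Set.Icc a b, g (γ.toFun s)) + ∫⁻ s in Set.Icc a b, h (γ.toFun s) :=
          add_le_add (key_f a b h0 hab hb) (key_e a b h0 hab hb)
      _ ≤ _ := le_lintegral_add _ _
  -- time functions
  have hγc : ContinuousOn γ.toFun (Set.Icc 0 L) := γ.lipschitzOn.continuousOn
  set m : ℝ → ℝ := fun s => min (f (γ.toFun s)) (e (γ.toFun s)) with hmdef
  have hmc : ContinuousOn m (Set.Icc 0 L) :=
    ContinuousOn.inf (hf.comp_continuousOn hγc) (he.comp_continuousOn hγc)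
  -- the equality-time set
  set Z : Set ℝ := {s | s ∈ Set.Icc 0 L ∧ f (γ.toFun s) = e (γ.toFun s)} with hZdef
  have hZsub : Z ⊆ Set.Icc 0 L := fun s hs => hs.1
  have hZclosed : IsClosed Z := by
    have hZeq : Z = Set.Icc 0 L ∩ (fun s => f (γ.toFun s) - e (γ.toFun s)) ⁻¹' {0} := by
      ext s
      simp only [hZdef, Set.mem_setOf_eq, Set.mem_inter_iff, Set.mem_preimage,
        Set.mem_singleton_iff, sub_eq_zero]
    rw [hZeq]
    exact ContinuousOn.preimage_isClosed_of_isClosed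
      ((hf.comp_continuousOn hγc).sub (he.comp_continuousOn hγc)) isClosed_Icc
      isClosed_singleton
  have hZmeas : MeasurableSet Z := hZclosed.measurableSet
  have hGtop_on_Z : ∀ s ∈ Z, G (γ.toFun s) = ⊤ := by
    intro s hs
    have hfe : f (γ.toFun s) = e (γ.toFun s) := hs.2
    simp only [hGdef, hfe, lt_irrefl, if_false, if_neg (lt_irrefl _)]
  by_cases hZvol : volume Z = 0
  swap
  · -- γ spends positive time on {f = e}: the integral is infinite
    have htop : curveLintegral G γ = ⊤ := by
      have h1 : ∫⁻ s in Z, G (γ.toFun s) = ⊤ := by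
        have hcongr : ∫⁻ s in Z, G (γ.toFun s) = ∫⁻ _ in Z, (⊤:ℝ≥0∞) :=
          setLIntegral_congr_fun hZmeas
            (fun s hs => hGtop_on_Z s hs)
        rw [hcongr, setLIntegral_const, ENNReal.top_mul hZvol]
      have h2 : ∫⁻ s in Z, G (γ.toFun s) ≤ curveLintegral G γ :=
        lintegral_mono' (Measure.restrict_mono hZsub le_rfl) le_rfl
      exact top_le_iff.mp (h1 ▸ h2)
    rw [htop]
    exact le_top
  -- main case: `Z` has zero time measure
  set base := volume.restrict (Set.Icc 0 L) with hbase
  set κ : Measure ℝ := base.withDensity (fun s => G (γ.toFun s)) with hκ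
  set κρ : Measure ℝ := base.withDensity (fun s => g (γ.toFun s) + h (γ.toFun s)) with hκρ
  have hκ_apply : ∀ A : Set ℝ, MeasurableSet A → A ⊆ Set.Icc 0 L →
      κ A = ∫⁻ s in A, G (γ.toFun s) := by
    intro A hA hAsub
    rw [hκ, withDensity_apply _ hA, hbase, Measure.restrict_restrict hA,
      Set.inter_eq_self_of_subset_left hAsub]
  have hκρ_apply : ∀ A : Set ℝ, MeasurableSet A → A ⊆ Set.Icc 0 L →
      κρ A = ∫⁻ s in A, (g (γ.toFun s) + h (γ.toFun s)) := by
    intro A hA hAsub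
    rw [hκρ, withDensity_apply _ hA, hbase, Measure.restrict_restrict hA,
      Set.inter_eq_self_of_subset_left hAsub]
  have hκρ_fin : κρ Set.univ ≠ ⊤ := by
    have hq : κρ Set.univ = curveLintegral (fun x => g x + h x) γ := by
      rw [hκρ, withDensity_apply _ MeasurableSet.univ, Measure.restrict_univ]
      rfl
    rw [hq]
    exact hm3
  have hκ_single : ∀ t : ℝ, κ {t} = 0 := by
    intro t
    rw [hκ, withDensity_apply _ (measurableSet_singleton t)]
    have hz : base.restrict {t} = 0 := Measure.restrict_eq_zero.mpr (by
      rw [hbase, Measure.restrict_apply (measurableSet_singleton t)]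
      exact measure_mono_null Set.inter_subset_left (measure_singleton t))
    rw [hz, lintegral_zero_measure]
  have hκρ_single : ∀ t : ℝ, κρ {t} = 0 := by
    intro t
    rw [hκρ, withDensity_apply _ (measurableSet_singleton t)]
    have hz : base.restrict {t} = 0 := Measure.restrict_eq_zero.mpr (by
      rw [hbase, Measure.restrict_apply (measurableSet_singleton t)]
      exact measure_mono_null Set.inter_subset_left (measure_singleton t))
    rw [hz, lintegral_zero_measure]
  have hκρZ : κρ Z = 0 := by
    rw [hκρ_apply Z hZmeas hZsub, Measure.restrict_eq_zero.mpr hZvol, lintegral_zero_measure]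
  refine ENNReal.le_of_forall_pos_le_add fun ε hε _ => ?_
  have hεpos : (0:ℝ≥0∞) < (ε : ℝ≥0∞) := ENNReal.coe_pos.mpr hε
  -- choose a small open neighborhood `O` of `Z`
  have hiInter : (⋂ n : ℕ, Metric.thickening (1/(n+1) : ℝ) Z) = Z := by
    apply Set.Subset.antisymm
    · intro s hs
      simp only [Set.mem_iInter] at hs
      have hcl : s ∈ closure Z := by
        rw [Metric.closure_eq_iInter_thickening Z]
        refine Set.mem_iInter.mpr fun δ => Set.mem_iInter.mpr fun hδ => ?_
        obtain ⟨n, hn⟩ := exists_nat_one_div_lt hδ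
        exact Metric.thickening_mono hn.le Z (hs n)
      rwa [hZclosed.closure_eq] at hcl
    · intro s hs
      exact Set.mem_iInter.mpr fun n => Metric.self_subset_thickening (by positivity) Z hs
  have htendO : Filter.Tendsto (fun n : ℕ => κρ (Metric.thickening (1/(n+1) : ℝ) Z))
      Filter.atTop (𝓝 0) := by
    have ht := tendsto_measure_iInter_atTop (μ := κρ)
      (s := fun n : ℕ => Metric.thickening (1/(n+1) : ℝ) Z)
      (fun n => Metric.isOpen_thickening.measurableSet.nullMeasurableSet)
      (fun n n' hnn' => Metric.thickening_mono
        (by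
          apply one_div_le_one_div_of_le
          · positivity
          · exact_mod_cast Nat.add_le_add_right hnn' 1) Z)
      ⟨0, ne_top_of_le_ne_top hκρ_fin (measure_mono (Set.subset_univ _))⟩
    rw [hiInter, hκρZ] at ht
    exact ht
  obtain ⟨n₀, hn₀⟩ : ∃ n : ℕ, κρ (Metric.thickening (1/(n+1) : ℝ) Z) < (ε : ℝ≥0∞) :=
    (htendO.eventually (gt_mem_nhds hεpos)).exists
  set O := Metric.thickening (1/(n₀+1) : ℝ) Z with hO
  have hOopen : IsOpen O := Metric.isOpen_thickening
  have hZO : Z ⊆ O := Metric.self_subset_thickening (by positivity) Z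
  -- the continuous-induction set
  set RHS : ℝ → ℝ≥0∞ := fun t => κ (Set.Icc 0 t) + κρ (Set.Icc 0 t ∩ O) with hRHS
  have hRHSmono : ∀ t t', t ≤ t' → RHS t ≤ RHS t' := fun t t' htt' =>
    add_le_add (measure_mono (Set.Icc_subset_Icc le_rfl htt'))
      (measure_mono (Set.inter_subset_inter_left _ (Set.Icc_subset_Icc le_rfl htt')))
  set S : Set ℝ := {t | t ∈ Set.Icc 0 L ∧ ENNReal.ofReal |m t - m 0| ≤ RHS t} with hS
  have h0S : (0:ℝ) ∈ S := ⟨⟨le_rfl, hL0⟩, by simp⟩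
  have hSN : S.Nonempty := ⟨0, h0S⟩
  have hSb : BddAbove S := ⟨L, fun t ht => ht.1.2⟩
  set t₀ := sSup S with ht₀def
  have ht₀I : t₀ ∈ Set.Icc 0 L := ⟨le_csSup hSb h0S, csSup_le hSN fun t ht => ht.1.2⟩
  have ht₀S : t₀ ∈ S := by
    refine ⟨ht₀I, ?_⟩
    refine ENNReal.le_of_forall_pos_le_add fun δ hδ _ => ?_
    have hδR : (0:ℝ) < δ := hδ
    have hc := hmc t₀ ht₀I
    rw [Metric.continuousWithinAt_iff] at hc
    obtain ⟨θ, hθ, hcθ⟩ := hc δ hδR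
    obtain ⟨t, htS, htgt⟩ := exists_lt_of_lt_csSup hSN
      (show t₀ - θ < sSup S from by rw [← ht₀def]; linarith)
    have htle : t ≤ t₀ := le_csSup hSb htS
    have hdist : dist t t₀ < θ := by
      rw [Real.dist_eq, abs_sub_lt_iff]
      constructor <;> linarith
    have hmt : |m t₀ - m t| ≤ δ := by
      have := hcθ htS.1 hdist
      rw [Real.dist_eq] at this
      rw [abs_sub_comm]
      exact this.le
    calc ENNReal.ofReal |m t₀ - m 0|
        ≤ ENNReal.ofReal (|m t₀ - m t| + |m t - m 0|) :=
          ENNReal.ofReal_le_ofReal (abs_sub_le _ _ _)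
      _ ≤ ENNReal.ofReal |m t₀ - m t| + ENNReal.ofReal |m t - m 0| := ENNReal.ofReal_add_le
      _ ≤ ENNReal.ofReal δ + RHS t :=
          add_le_add (ENNReal.ofReal_le_ofReal hmt) htS.2
      _ ≤ RHS t₀ + (δ : ℝ≥0∞) := by
          rw [ENNReal.ofReal_coe_nnreal, add_comm]
          exact add_le_add (hRHSmono t t₀ htle) le_rfl
  have ht₀L : t₀ = L := by
    by_contra hneq
    have ht₀lt : t₀ < L := lt_of_le_of_ne ht₀I.2 hneq
    have hstep : ∃ t', t' ∈ S ∧ t₀ < t' := by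
      by_cases hOt : t₀ ∈ O
      · -- inside the penalty region
        obtain ⟨θ, hθpos, hball⟩ := Metric.isOpen_iff.mp hOopen t₀ hOt
        refine ⟨min (t₀ + θ/2) L, ⟨⟨?_, min_le_right _ _⟩, ?_⟩, ?_⟩
        · exact le_trans ht₀I.1 (le_min (by linarith) ht₀lt.le)
        swap
        · exact lt_min (by linarith) ht₀lt
        set t' := min (t₀ + θ/2) L with ht'def
        have ht'gt : t₀ < t' := lt_min (by linarith) ht₀lt
        have ht'le : t' ≤ L := min_le_right _ _
        have hsub : Set.Icc t₀ t' ⊆ O := by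
          intro s hs
          apply hball
          rw [Metric.mem_ball, Real.dist_eq, abs_sub_lt_iff]
          have h1 : s ≤ t₀ + θ/2 := le_trans hs.2 (min_le_left _ _)
          have h2 : t₀ ≤ s := hs.1
          constructor <;> linarith
        have hinc : ENNReal.ofReal |m t' - m t₀| ≤ κρ (Set.Ioc t₀ t') := by
          have h1 : ENNReal.ofReal |m t₀ - m t'| ≤
              ∫⁻ s in Set.Icc t₀ t', (g (γ.toFun s) + h (γ.toFun s)) :=
            key_m t₀ t' ht₀I.1 ht'gt.le ht'le
          rw [abs_sub_comm] at h1
          have h2 : (∫⁻ s in Set.Icc t₀ t', (g (γ.toFun s) + h (γ.toFun s)))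
              = κρ (Set.Icc t₀ t') :=
            (hκρ_apply _ measurableSet_Icc (Set.Icc_subset_Icc ht₀I.1 ht'le)).symm
          have h3 : κρ (Set.Icc t₀ t') ≤ κρ {t₀} + κρ (Set.Ioc t₀ t') := by
            refine le_trans (measure_mono ?_) (measure_union_le _ _)
            intro s hs
            rcases eq_or_lt_of_le hs.1 with hq | hq
            · exact Or.inl (by simp [← hq])
            · exact Or.inr ⟨hq, hs.2⟩
          rw [hκρ_single, zero_add] at h3
          exact le_trans h1 (le_trans (le_of_eq h2) h3)
        have hdisj : Disjoint (Set.Icc 0 t₀ ∩ O) (Set.Ioc t₀ t') := by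
          rw [Set.disjoint_left]
          rintro s ⟨hs1, -⟩ hs2
          exact absurd hs1.2 (not_le.mpr hs2.1)
        have hmeasadd : κρ (Set.Icc 0 t₀ ∩ O) + κρ (Set.Ioc t₀ t') ≤ κρ (Set.Icc 0 t' ∩ O) := by
          rw [← measure_union hdisj measurableSet_Ioc]
          refine measure_mono ?_
          rintro s (hs | hs)
          · exact ⟨Set.Icc_subset_Icc le_rfl ht'gt.le hs.1, hs.2⟩
          · exact ⟨⟨le_trans ht₀I.1 hs.1.le, hs.2⟩, hsub ⟨hs.1.le, hs.2⟩⟩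
        calc ENNReal.ofReal |m t' - m 0|
            ≤ ENNReal.ofReal |m t' - m t₀| + ENNReal.ofReal |m t₀ - m 0| :=
              le_trans (ENNReal.ofReal_le_ofReal (abs_sub_le _ _ _)) ENNReal.ofReal_add_le
          _ ≤ κρ (Set.Ioc t₀ t') + RHS t₀ := add_le_add hinc ht₀S.2
          _ = κ (Set.Icc 0 t₀) + (κρ (Set.Icc 0 t₀ ∩ O) + κρ (Set.Ioc t₀ t')) := by
              rw [hRHS]
              rw [add_comm (κρ (Set.Ioc t₀ t')) _, add_assoc]
          _ ≤ κ (Set.Icc 0 t') + κρ (Set.Icc 0 t' ∩ O) :=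
              add_le_add (measure_mono (Set.Icc_subset_Icc le_rfl ht'gt.le)) hmeasadd
      · -- outside the penalty region: strict sign
        have ht₀Z : t₀ ∉ Z := fun hz => hOt (hZO hz)
        have hneq2 : f (γ.toFun t₀) ≠ e (γ.toFun t₀) := fun heq2 => ht₀Z ⟨ht₀I, heq2⟩
        rcases lt_or_gt_of_ne hneq2 with hsign | hsign
        · -- f < e near t₀ : m = f ∘ γ locally
          have hwc : ContinuousWithinAt (fun s => e (γ.toFun s) - f (γ.toFun s))
              (Set.Icc 0 L) t₀ :=
            ((he.comp_continuousOn hγc).sub (hf.comp_continuousOn hγc)) t₀ ht₀I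
          rw [Metric.continuousWithinAt_iff] at hwc
          obtain ⟨θ, hθpos, hθ⟩ := hwc (e (γ.toFun t₀) - f (γ.toFun t₀)) (by linarith)
          set t' := min (t₀ + θ/2) L with ht'def
          have ht'gt : t₀ < t' := lt_min (by linarith) ht₀lt
          have ht'le : t' ≤ L := min_le_right _ _
          have ht'I : t' ∈ Set.Icc 0 L := ⟨le_trans ht₀I.1 ht'gt.le, ht'le⟩
          have hsgn : ∀ s ∈ Set.Icc t₀ t', f (γ.toFun s) < e (γ.toFun s) := by
            intro s hs
            have hsI : s ∈ Set.Icc 0 L :=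
              ⟨le_trans ht₀I.1 hs.1, le_trans hs.2 ht'le⟩
            have hd : dist s t₀ < θ := by
              rw [Real.dist_eq, abs_sub_lt_iff]
              have h1 : s ≤ t₀ + θ/2 := le_trans hs.2 (min_le_left _ _)
              have h2 : t₀ ≤ s := hs.1
              constructor <;> linarith
            have := hθ hsI hd
            rw [Real.dist_eq, abs_sub_lt_iff] at this
            have h3 := this.2
            linarith
          have hGg : ∀ s ∈ Set.Icc t₀ t', G (γ.toFun s) = g (γ.toFun s) := by
            intro s hs
            simp only [hGdef, if_pos (hsgn s hs)]
          have hmf : ∀ s ∈ Set.Icc t₀ t', m s = f (γ.toFun s) := by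
            intro s hs
            exact min_eq_left (hsgn s hs).le
          have hinc : ENNReal.ofReal |m t' - m t₀| ≤ κ (Set.Ioc t₀ t') := by
            have h1 : ENNReal.ofReal |f (γ.toFun t₀) - f (γ.toFun t')| ≤
                ∫⁻ s in Set.Icc t₀ t', g (γ.toFun s) := key_f t₀ t' ht₀I.1 ht'gt.le ht'le
            have h1' : ENNReal.ofReal |m t' - m t₀| ≤
                ∫⁻ s in Set.Icc t₀ t', g (γ.toFun s) := by
              rw [hmf t' ⟨ht'gt.le, le_rfl⟩, hmf t₀ ⟨le_rfl, ht'gt.le⟩, abs_sub_comm]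
              exact h1
            have h2 : (∫⁻ s in Set.Icc t₀ t', g (γ.toFun s))
                = ∫⁻ s in Set.Icc t₀ t', G (γ.toFun s) :=
              (setLIntegral_congr_fun measurableSet_Icc
                (fun s hs => (hGg s hs).symm))
            have h3 : (∫⁻ s in Set.Icc t₀ t', G (γ.toFun s)) = κ (Set.Icc t₀ t') :=
              (hκ_apply _ measurableSet_Icc (Set.Icc_subset_Icc ht₀I.1 ht'le)).symm
            have h4 : κ (Set.Icc t₀ t') ≤ κ {t₀} + κ (Set.Ioc t₀ t') := by
              refine le_trans (measure_mono ?_) (measure_union_le _ _)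
              intro s hs
              rcases eq_or_lt_of_le hs.1 with hq | hq
              · exact Or.inl (by simp [← hq])
              · exact Or.inr ⟨hq, hs.2⟩
            rw [hκ_single, zero_add] at h4
            rw [h2, h3] at h1'
            exact le_trans h1' h4
          refine ⟨t', ⟨ht'I, ?_⟩, ht'gt⟩
          have hsplit : κ (Set.Icc 0 t₀) + κ (Set.Ioc t₀ t') = κ (Set.Icc 0 t') := by
            rw [← measure_union (by
              rw [Set.disjoint_left]
              rintro s hs1 hs2
              exact absurd hs1.2 (not_le.mpr hs2.1)) measurableSet_Ioc,
              Set.Icc_union_Ioc_eq_Icc ht₀I.1 ht'gt.le]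
          calc ENNReal.ofReal |m t' - m 0|
              ≤ ENNReal.ofReal |m t' - m t₀| + ENNReal.ofReal |m t₀ - m 0| :=
                le_trans (ENNReal.ofReal_le_ofReal (abs_sub_le _ _ _)) ENNReal.ofReal_add_le
            _ ≤ κ (Set.Ioc t₀ t') + RHS t₀ := add_le_add hinc ht₀S.2
            _ = (κ (Set.Icc 0 t₀) + κ (Set.Ioc t₀ t')) + κρ (Set.Icc 0 t₀ ∩ O) := by
                rw [hRHS]
                rw [add_comm (κ (Set.Ioc t₀ t')) _, add_assoc, add_comm (κρ _) _, ← add_assoc]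
            _ = κ (Set.Icc 0 t') + κρ (Set.Icc 0 t₀ ∩ O) := by rw [hsplit]
            _ ≤ κ (Set.Icc 0 t') + κρ (Set.Icc 0 t' ∩ O) :=
                add_le_add le_rfl (measure_mono
                  (Set.inter_subset_inter_left _ (Set.Icc_subset_Icc le_rfl ht'gt.le)))
        · -- e < f near t₀ : m = e ∘ γ locally
          have hwc : ContinuousWithinAt (fun s => f (γ.toFun s) - e (γ.toFun s))
              (Set.Icc 0 L) t₀ :=
            ((hf.comp_continuousOn hγc).sub (he.comp_continuousOn hγc)) t₀ ht₀I
          rw [Metric.continuousWithinAt_iff] at hwc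
          obtain ⟨θ, hθpos, hθ⟩ := hwc (f (γ.toFun t₀) - e (γ.toFun t₀)) (by
            have : e (γ.toFun t₀) < f (γ.toFun t₀) := hsign
            linarith)
          set t' := min (t₀ + θ/2) L with ht'def
          have ht'gt : t₀ < t' := lt_min (by linarith) ht₀lt
          have ht'le : t' ≤ L := min_le_right _ _
          have ht'I : t' ∈ Set.Icc 0 L := ⟨le_trans ht₀I.1 ht'gt.le, ht'le⟩
          have hsgn : ∀ s ∈ Set.Icc t₀ t', e (γ.toFun s) < f (γ.toFun s) := by
            intro s hs
            have hsI : s ∈ Set.Icc 0 L :=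
              ⟨le_trans ht₀I.1 hs.1, le_trans hs.2 ht'le⟩
            have hd : dist s t₀ < θ := by
              rw [Real.dist_eq, abs_sub_lt_iff]
              have h1 : s ≤ t₀ + θ/2 := le_trans hs.2 (min_le_left _ _)
              have h2 : t₀ ≤ s := hs.1
              constructor <;> linarith
            have := hθ hsI hd
            rw [Real.dist_eq, abs_sub_lt_iff] at this
            have h3 := this.2
            have h4 : e (γ.toFun t₀) < f (γ.toFun t₀) := hsign
            linarith
          have hGg : ∀ s ∈ Set.Icc t₀ t', G (γ.toFun s) = h (γ.toFun s) := by
            intro s hs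
            simp only [hGdef, if_neg (not_lt.mpr (hsgn s hs).le), if_pos (hsgn s hs)]
          have hmf : ∀ s ∈ Set.Icc t₀ t', m s = e (γ.toFun s) := by
            intro s hs
            exact min_eq_right (hsgn s hs).le
          have hinc : ENNReal.ofReal |m t' - m t₀| ≤ κ (Set.Ioc t₀ t') := by
            have h1 : ENNReal.ofReal |e (γ.toFun t₀) - e (γ.toFun t')| ≤
                ∫⁻ s in Set.Icc t₀ t', h (γ.toFun s) := key_e t₀ t' ht₀I.1 ht'gt.le ht'le
            have h1' : ENNReal.ofReal |m t' - m t₀| ≤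
                ∫⁻ s in Set.Icc t₀ t', h (γ.toFun s) := by
              rw [hmf t' ⟨ht'gt.le, le_rfl⟩, hmf t₀ ⟨le_rfl, ht'gt.le⟩, abs_sub_comm]
              exact h1
            have h2 : (∫⁻ s in Set.Icc t₀ t', h (γ.toFun s))
                = ∫⁻ s in Set.Icc t₀ t', G (γ.toFun s) :=
              (setLIntegral_congr_fun measurableSet_Icc
                (fun s hs => (hGg s hs).symm))
            have h3 : (∫⁻ s in Set.Icc t₀ t', G (γ.toFun s)) = κ (Set.Icc t₀ t') :=
              (hκ_apply _ measurableSet_Icc (Set.Icc_subset_Icc ht₀I.1 ht'le)).symm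
            have h4 : κ (Set.Icc t₀ t') ≤ κ {t₀} + κ (Set.Ioc t₀ t') := by
              refine le_trans (measure_mono ?_) (measure_union_le _ _)
              intro s hs
              rcases eq_or_lt_of_le hs.1 with hq | hq
              · exact Or.inl (by simp [← hq])
              · exact Or.inr ⟨hq, hs.2⟩
            rw [hκ_single, zero_add] at h4
            rw [h2, h3] at h1'
            exact le_trans h1' h4
          refine ⟨t', ⟨ht'I, ?_⟩, ht'gt⟩
          have hsplit : κ (Set.Icc 0 t₀) + κ (Set.Ioc t₀ t') = κ (Set.Icc 0 t') := by
            rw [← measure_union (by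
              rw [Set.disjoint_left]
              rintro s hs1 hs2
              exact absurd hs1.2 (not_le.mpr hs2.1)) measurableSet_Ioc,
              Set.Icc_union_Ioc_eq_Icc ht₀I.1 ht'gt.le]
          calc ENNReal.ofReal |m t' - m 0|
              ≤ ENNReal.ofReal |m t' - m t₀| + ENNReal.ofReal |m t₀ - m 0| :=
                le_trans (ENNReal.ofReal_le_ofReal (abs_sub_le _ _ _)) ENNReal.ofReal_add_le
            _ ≤ κ (Set.Ioc t₀ t') + RHS t₀ := add_le_add hinc ht₀S.2
            _ = (κ (Set.Icc 0 t₀) + κ (Set.Ioc t₀ t')) + κρ (Set.Icc 0 t₀ ∩ O) := by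
                rw [hRHS]
                rw [add_comm (κ (Set.Ioc t₀ t')) _, add_assoc, add_comm (κρ _) _, ← add_assoc]
            _ = κ (Set.Icc 0 t') + κρ (Set.Icc 0 t₀ ∩ O) := by rw [hsplit]
            _ ≤ κ (Set.Icc 0 t') + κρ (Set.Icc 0 t' ∩ O) :=
                add_le_add le_rfl (measure_mono
                  (Set.inter_subset_inter_left _ (Set.Icc_subset_Icc le_rfl ht'gt.le)))
    obtain ⟨t', ht'S, ht'gt⟩ := hstep
    exact absurd (le_csSup hSb ht'S) (not_le.mpr ht'gt)
  -- conclusion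
  have hfinal := ht₀S.2
  rw [ht₀L] at hfinal
  have hκfull : κ (Set.Icc 0 L) = curveLintegral G γ := by
    rw [hκ_apply _ measurableSet_Icc Set.Subset.rfl]
    rfl
  have hκρO : κρ (Set.Icc 0 L ∩ O) ≤ (ε : ℝ≥0∞) :=
    le_trans (measure_mono Set.inter_subset_right) hn₀.le
  calc ENNReal.ofReal
        |min (f (γ.toFun 0)) (e (γ.toFun 0)) - min (f (γ.toFun γ.len)) (e (γ.toFun γ.len))|
      = ENNReal.ofReal |m L - m 0| := by rw [abs_sub_comm]
    _ ≤ κ (Set.Icc 0 L) + κρ (Set.Icc 0 L ∩ O) := hfinal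
    _ ≤ curveLintegral G γ + (ε : ℝ≥0∞) := by
        rw [hκfull]
        exact add_le_add le_rfl hκρO

end Aux3


section Aux4

open MeasureTheory

lemma isWUG_max {μ : Measure X} (f e : X → ℝ) (hf : Continuous f) (he : Continuous e)
    {g h : X → ℝ≥0∞} (hg : IsWeakUpperGradientOn μ g f Set.univ)
    (hh : IsWeakUpperGradientOn μ h e Set.univ)
    (hfin : ∫⁻ x, (g x + h x) ∂μ ≠ ⊤) :
    IsWeakUpperGradientOn μ
      (fun x => if e x < f x then g x else if f x < e x then h x else ⊤)
      (fun x => max (f x) (e x)) Set.univ := by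
  have hgneg : IsWeakUpperGradientOn μ g (fun x => -f x) Set.univ :=
    isWUG_congr_abs (fun x y => by rw [neg_sub_neg, abs_sub_comm]) hg
  have hhneg : IsWeakUpperGradientOn μ h (fun x => -e x) Set.univ :=
    isWUG_congr_abs (fun x y => by rw [neg_sub_neg, abs_sub_comm]) hh
  have hmin := isWUG_min (fun x => -f x) (fun x => -e x) hf.neg he.neg hgneg hhneg hfin
  have hfun : (fun x => if -f x < -e x then g x else if -e x < -f x then h x else ⊤)
      = fun x => if e x < f x then g x else if f x < e x then h x else ⊤ := by
    funext x
    simp only [neg_lt_neg_iff]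
  rw [hfun] at hmin
  refine isWUG_congr_abs (fun x y => ?_) hmin
  rw [min_neg_neg, min_neg_neg, neg_sub_neg, abs_sub_comm]

lemma gradEnergy_min_max_le {μ : Measure X} {f e : X → ℝ} (hf : Continuous f)
    (he : Continuous e) (hnull : μ {x | f x = e x} = 0) :
    gradEnergy μ (fun x => min (f x) (e x)) Set.univ
      + gradEnergy μ (fun x => max (f x) (e x)) Set.univ
      ≤ gradEnergy μ f Set.univ + gradEnergy μ e Set.univ := by
  refine ENNReal.le_of_forall_pos_le_add fun ε hε hlt => ?_
  have hEf : gradEnergy μ f Set.univ ≠ ⊤ := fun hc => by simp [hc] at hlt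
  have hEe : gradEnergy μ e Set.univ ≠ ⊤ := fun hc => by simp [hc] at hlt
  have hε2 : ((ε : ℝ≥0∞) / 2) ≠ 0 := by simp [hε.ne']
  obtain ⟨g, hgw, hgv⟩ := exists_wug_lt (ENNReal.lt_add_right hEf hε2)
  obtain ⟨h, hhw, hhv⟩ := exists_wug_lt (ENNReal.lt_add_right hEe hε2)
  have hsum_fin : ∫⁻ x, (g x + h x) ∂μ ≠ ⊤ := by
    rw [lintegral_add_left hgw.1]
    exact ENNReal.add_ne_top.mpr
      ⟨(hgv.trans_le le_top).ne, (hhv.trans_le le_top).ne⟩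
  have hmin := isWUG_min f e hf he hgw hhw hsum_fin
  have hmax := isWUG_max f e hf he hgw hhw hsum_fin
  have hGmmeas : Measurable (fun x => if f x < e x then g x else if e x < f x then h x else ⊤) :=
    hmin.1
  have hae : (fun x => (if f x < e x then g x else if e x < f x then h x else ⊤)
      + (if e x < f x then g x else if f x < e x then h x else ⊤))
      =ᵐ[μ] fun x => g x + h x := by
    have hane : ∀ᵐ x ∂μ, f x ≠ e x := by
      rw [ae_iff]
      simpa using hnull
    refine hane.mono fun x hx => ?_
    rcases lt_or_gt_of_ne hx with hc | hc
    · simp only [if_pos hc, if_neg (not_lt.mpr hc.le)]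
    · simp only [if_neg (not_lt.mpr hc.le), if_pos hc]
      exact add_comm _ _
  calc gradEnergy μ (fun x => min (f x) (e x)) Set.univ
        + gradEnergy μ (fun x => max (f x) (e x)) Set.univ
      ≤ (∫⁻ x, (if f x < e x then g x else if e x < f x then h x else ⊤) ∂μ)
        + ∫⁻ x, (if e x < f x then g x else if f x < e x then h x else ⊤) ∂μ :=
        add_le_add (gradEnergy_le_of_wug hmin) (gradEnergy_le_of_wug hmax)
    _ = ∫⁻ x, ((if f x < e x then g x else if e x < f x then h x else ⊤)
        + (if e x < f x then g x else if f x < e x then h x else ⊤)) ∂μ :=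
        (lintegral_add_left hGmmeas _).symm
    _ = ∫⁻ x, (g x + h x) ∂μ := lintegral_congr_ae hae
    _ = (∫⁻ x, g x ∂μ) + ∫⁻ x, h x ∂μ := lintegral_add_left hgw.1 _
    _ ≤ (gradEnergy μ f Set.univ + (ε:ℝ≥0∞)/2)
        + (gradEnergy μ e Set.univ + (ε:ℝ≥0∞)/2) := add_le_add hgv.le hhv.le
    _ = gradEnergy μ f Set.univ + gradEnergy μ e Set.univ + (ε:ℝ≥0∞) := by
        rw [add_add_add_comm, ENNReal.add_halves]

end Aux4


section Aux5

open MeasureTheory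

lemma measure_lt_top_of_compact_closure {μ : Measure X}
    (hball : ∀ (x : X) (r : ℝ), 0 < r → 0 < μ (ball x r) ∧ μ (ball x r) < ⊤)
    {W' : Set X} (h : IsCompact (closure W')) : μ W' < ⊤ := by
  rcases Set.eq_empty_or_nonempty W' with rfl | ⟨y, hy⟩
  · simp
  · obtain ⟨r, hr⟩ := (Metric.isBounded_iff_subset_closedBall y).mp h.isBounded
    have hsub : W' ⊆ ball y (max r 0 + 1) := fun z hz => by
      have := hr (subset_closure hz)
      rw [Metric.mem_closedBall] at this
      rw [Metric.mem_ball]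
      have : dist z y ≤ max r 0 := le_trans this (le_max_left _ _)
      linarith
    exact lt_of_le_of_lt (measure_mono hsub) (hball y _ (by positivity)).2

lemma variationOn_le_seq {μ : Measure X} {v : X → ℝ} {u : ℕ → X → ℝ}
    (hl : ∀ i, LocLipschitzOn (u i) Set.univ) (ht : TendstoL1loc μ Set.univ u v) :
    variationOn μ v Set.univ
      ≤ Filter.liminf (fun i => gradEnergy μ (u i) Set.univ) Filter.atTop :=
  iInf_le_of_le u (iInf_le_of_le ⟨hl, ht⟩ le_rfl)

lemma liminf_le_of_bound {a : ℕ → ℝ≥0∞} {C : ℝ≥0∞} (h : ∀ i, a i ≤ C) :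
    Filter.liminf a Filter.atTop ≤ C :=
  le_trans Filter.liminf_le_limsup (Filter.limsup_le_of_le (h := Filter.Eventually.of_forall h))

lemma exists_seq_grad_bound {μ : Measure X} {v : X → ℝ} {c : ℝ≥0∞}
    (h : variationOn μ v Set.univ < c) :
    ∃ u : ℕ → X → ℝ, (∀ i, LocLipschitzOn (u i) Set.univ) ∧ TendstoL1loc μ Set.univ u v ∧
      ∀ i, gradEnergy μ (u i) Set.univ < c := by
  rw [variationOn] at h
  obtain ⟨u, hu⟩ := iInf_lt_iff.mp h
  obtain ⟨⟨hl, ht⟩, hlim⟩ := iInf_lt_iff.mp hu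
  obtain ⟨φ, hφ, hφlt⟩ := Filter.extraction_of_frequently_atTop
    (Filter.frequently_lt_of_liminf_lt (h := hlim))
  refine ⟨fun i => u (φ i), fun i => hl (φ i), ?_, fun i => hφlt i⟩
  intro W' hW1 hW2 hW3
  exact (ht W' hW1 hW2 hW3).comp hφ.tendsto_atTop

lemma liminf_add_liminf_le {a b : ℕ → ℝ≥0∞} {C : ℝ≥0∞} (hC : C ≠ ⊤)
    (h : ∀ i, a i + b i ≤ C) :
    Filter.liminf a Filter.atTop + Filter.liminf b Filter.atTop ≤ C := by
  set La := Filter.liminf a Filter.atTop with hLa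
  set Lb := Filter.liminf b Filter.atTop with hLb
  by_contra hcon
  push_neg at hcon
  by_cases h1 : C < Lb
  · obtain ⟨y, hy1, hy2⟩ := exists_between h1
    obtain ⟨i, hi⟩ := (Filter.eventually_lt_of_lt_liminf hy2).exists
    exact absurd (le_trans le_add_self (h i)) (not_le.mpr (lt_of_le_of_lt hy1.le hi))
  by_cases h2 : C < La
  · obtain ⟨y, hy1, hy2⟩ := exists_between h2
    obtain ⟨i, hi⟩ := (Filter.eventually_lt_of_lt_liminf hy2).exists
    exact absurd (le_trans le_self_add (h i)) (not_le.mpr (lt_of_le_of_lt hy1.le hi))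
  push_neg at h1 h2
  have hLaT : La ≠ ⊤ := fun hc => hC (top_le_iff.mp (hc ▸ h2))
  have hLbT : Lb ≠ ⊤ := fun hc => hC (top_le_iff.mp (hc ▸ h1))
  set a' := La.toReal with ha'
  set b' := Lb.toReal with hb'
  set c' := C.toReal with hc'
  have hreal : c' < a' + b' := by
    have := (ENNReal.toReal_lt_toReal hC (by
      rw [ENNReal.add_ne_top]; exact ⟨hLaT, hLbT⟩)).mpr hcon
    rwa [ENNReal.toReal_add hLaT hLbT] at this
  have ha'le : a' ≤ c' := ENNReal.toReal_le_toReal hLaT hC |>.mpr h2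
  have hb'le : b' ≤ c' := ENNReal.toReal_le_toReal hLbT hC |>.mpr h1
  set d := (a' + b' - c') / 2 with hd
  have hdpos : 0 < d := by simp only [hd]; linarith
  set x' := a' - d with hx'
  set y' := b' - d with hy'
  have hx'nn : 0 ≤ x' := by simp only [hx', hd]; linarith
  have hy'nn : 0 ≤ y' := by simp only [hy', hd]; linarith
  have hxy : x' + y' = c' := by simp only [hx', hy', hd]; ring
  have hxlt : ENNReal.ofReal x' < La := by
    rw [ENNReal.ofReal_lt_iff_lt_toReal hx'nn hLaT, ← ha']
    simp only [hx']
    linarith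
  have hylt : ENNReal.ofReal y' < Lb := by
    rw [ENNReal.ofReal_lt_iff_lt_toReal hy'nn hLbT, ← hb']
    simp only [hy']
    linarith
  obtain ⟨i, hia, hib⟩ :=
    ((Filter.eventually_lt_of_lt_liminf hxlt).and (Filter.eventually_lt_of_lt_liminf hylt)).exists
  have : C < a i + b i := by
    have hadd := ENNReal.add_lt_add hia hib
    rwa [← ENNReal.ofReal_add hx'nn hy'nn, hxy, hc', ENNReal.ofReal_toReal hC] at hadd
  exact absurd (h i) (not_le.mpr this)

lemma exists_small_shift {μ : Measure X} [SigmaFinite μ] (w : X → ℝ) (hw : Measurable w)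
    (r : ℝ) (hr : 0 < r) :
    ∃ c : ℝ, 0 < c ∧ c < r ∧ μ {x | w x = c} = 0 := by
  by_contra hcon
  push_neg at hcon
  have hsub : Set.Ioo (0:ℝ) r ⊆ {t : ℝ | 0 < μ {x | w x = t}} := fun c hc =>
    pos_iff_ne_zero.mpr (hcon c hc.1 hc.2)
  have hcnt : (Set.Ioo (0:ℝ) r).Countable :=
    (Measure.countable_meas_level_set_pos hw).mono hsub
  have hz := hcnt.measure_zero (volume : Measure ℝ)
  rw [Real.volume_Ioo] at hz
  simp only [ENNReal.ofReal_eq_zero, sub_nonpos] at hz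
  linarith

lemma perimeter_univ_eq (μ : Measure X) (A : Set X) :
    perimeter μ A Set.univ = variationOn μ (A.indicator fun _ => (1:ℝ)) Set.univ := by
  rw [perimeter, totalVar]
  refine le_antisymm (iInf_le_of_le Set.univ (iInf_le_of_le ⟨isOpen_univ, Set.Subset.rfl⟩ le_rfl))
    (le_iInf fun W => le_iInf fun hW => ?_)
  rw [Set.univ_subset_iff.mp hW.2]

lemma lintegral_ofReal_abs_add_le {μ : Measure X} {p q : X → ℝ} (hp : Measurable p)
    (W' : Set X) :
    ∫⁻ x in W', ENNReal.ofReal |p x + q x| ∂μ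
      ≤ (∫⁻ x in W', ENNReal.ofReal |p x| ∂μ) + ∫⁻ x in W', ENNReal.ofReal |q x| ∂μ := by
  calc ∫⁻ x in W', ENNReal.ofReal |p x + q x| ∂μ
      ≤ ∫⁻ x in W', (ENNReal.ofReal |p x| + ENNReal.ofReal |q x|) ∂μ :=
        lintegral_mono fun x =>
          le_trans (ENNReal.ofReal_le_ofReal (abs_add_le _ _)) ENNReal.ofReal_add_le
    _ = _ := lintegral_add_left (ENNReal.measurable_ofReal.comp hp.abs) _

end Aux5


section Aux6

open MeasureTheory

lemma indicator_inter_min (A B : Set X) (x : X) :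
    (A ∩ B).indicator (fun _ => (1:ℝ)) x
      = min (A.indicator (fun _ => (1:ℝ)) x) (B.indicator (fun _ => (1:ℝ)) x) := by
  by_cases hA : x ∈ A <;> by_cases hB : x ∈ B <;>
    simp [Set.indicator_apply, hA, hB, Set.mem_inter_iff] <;> norm_num

lemma indicator_union_max (A B : Set X) (x : X) :
    (A ∪ B).indicator (fun _ => (1:ℝ)) x
      = max (A.indicator (fun _ => (1:ℝ)) x) (B.indicator (fun _ => (1:ℝ)) x) := by
  by_cases hA : x ∈ A <;> by_cases hB : x ∈ B <;>
    simp [Set.indicator_apply, hA, hB, Set.mem_union] <;> norm_num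

lemma indicator_union_add {A B : Set X} (hdisj : Disjoint A B) (x : X) :
    (A ∪ B).indicator (fun _ => (1:ℝ)) x
      = A.indicator (fun _ => (1:ℝ)) x + B.indicator (fun _ => (1:ℝ)) x := by
  by_cases hA : x ∈ A <;> by_cases hB : x ∈ B
  · exact absurd hB (Set.disjoint_left.mp hdisj hA)
  all_goals simp [Set.indicator_apply, hA, hB, Set.mem_union]

lemma perimeter_union_le_of_disjoint {μ : Measure X} {A B : Set X}
    (hA : MeasurableSet A) (hB : MeasurableSet B) (hdisj : Disjoint A B) :
    perimeter μ (A ∪ B) Set.univ ≤ perimeter μ A Set.univ + perimeter μ B Set.univ := by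
  rcases eq_top_or_lt_top (perimeter μ A Set.univ) with hPA | hPA
  · rw [hPA, top_add]; exact le_top
  rcases eq_top_or_lt_top (perimeter μ B Set.univ) with hPB | hPB
  · rw [hPB, add_top]; exact le_top
  refine ENNReal.le_of_forall_pos_le_add fun ε hε _ => ?_
  have hε2 : ((ε : ℝ≥0∞) / 2) ≠ 0 := by simp [hε.ne']
  obtain ⟨a, hal, hat, hae⟩ := exists_seq_grad_bound
    (show variationOn μ (A.indicator fun _ => (1:ℝ)) Set.univ
        < perimeter μ A Set.univ + (ε : ℝ≥0∞)/2 by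
      rw [← perimeter_univ_eq]
      exact ENNReal.lt_add_right hPA.ne hε2)
  obtain ⟨b, hbl, hbt, hbe⟩ := exists_seq_grad_bound
    (show variationOn μ (B.indicator fun _ => (1:ℝ)) Set.univ
        < perimeter μ B Set.univ + (ε : ℝ≥0∞)/2 by
      rw [← perimeter_univ_eq]
      exact ENNReal.lt_add_right hPB.ne hε2)
  have hwl : ∀ i, LocLipschitzOn (fun x => a i x + b i x) Set.univ :=
    fun i => locLip_add (hal i) (hbl i)
  have hwt : TendstoL1loc μ Set.univ (fun i x => a i x + b i x)
      ((A ∪ B).indicator fun _ => (1:ℝ)) := by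
    intro W' hW1 hW2 hW3
    have hbound : ∀ i, (∫⁻ x in W',
        ENNReal.ofReal |a i x + b i x - (A ∪ B).indicator (fun _ => (1:ℝ)) x| ∂μ)
        ≤ (∫⁻ x in W', ENNReal.ofReal |a i x - A.indicator (fun _ => (1:ℝ)) x| ∂μ)
          + ∫⁻ x in W', ENNReal.ofReal |b i x - B.indicator (fun _ => (1:ℝ)) x| ∂μ := by
      intro i
      have heq : ∀ x, a i x + b i x - (A ∪ B).indicator (fun _ => (1:ℝ)) x
          = (a i x - A.indicator (fun _ => (1:ℝ)) x)
            + (b i x - B.indicator (fun _ => (1:ℝ)) x) := by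
        intro x
        rw [indicator_union_add hdisj]
        ring
      simp only [heq]
      exact lintegral_ofReal_abs_add_le
        (((hal i).continuous').measurable.sub (measurable_const.indicator hA)) W'
    have hsum := (hat W' hW1 hW2 hW3).add (hbt W' hW1 hW2 hW3)
    rw [add_zero] at hsum
    exact tendsto_of_tendsto_of_tendsto_of_le_of_le tendsto_const_nhds hsum
      (fun i => zero_le) hbound
  have hbnd : ∀ i, gradEnergy μ (fun x => a i x + b i x) Set.univ
      ≤ perimeter μ A Set.univ + perimeter μ B Set.univ + (ε : ℝ≥0∞) := by
    intro i
    calc gradEnergy μ (fun x => a i x + b i x) Set.univ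
        ≤ gradEnergy μ (a i) Set.univ + gradEnergy μ (b i) Set.univ :=
          gradEnergy_add_le μ _ _
      _ ≤ (perimeter μ A Set.univ + (ε : ℝ≥0∞)/2)
          + (perimeter μ B Set.univ + (ε : ℝ≥0∞)/2) := add_le_add (hae i).le (hbe i).le
      _ = perimeter μ A Set.univ + perimeter μ B Set.univ + (ε : ℝ≥0∞) := by
          rw [add_add_add_comm, ENNReal.add_halves]
  calc perimeter μ (A ∪ B) Set.univ
      = variationOn μ ((A ∪ B).indicator fun _ => (1:ℝ)) Set.univ := perimeter_univ_eq μ _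
    _ ≤ Filter.liminf (fun i => gradEnergy μ (fun x => a i x + b i x) Set.univ) Filter.atTop :=
        variationOn_le_seq hwl hwt
    _ ≤ perimeter μ A Set.univ + perimeter μ B Set.univ + (ε : ℝ≥0∞) := liminf_le_of_bound hbnd

lemma perimeter_submodular {μ : Measure X} [SigmaFinite μ]
    (hball : ∀ (x : X) (r : ℝ), 0 < r → 0 < μ (ball x r) ∧ μ (ball x r) < ⊤)
    {A B : Set X} (hA : MeasurableSet A) (hB : MeasurableSet B)
    (hPA : perimeter μ A Set.univ ≠ ⊤) (hPB : perimeter μ B Set.univ ≠ ⊤) :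
    perimeter μ (A ∩ B) Set.univ + perimeter μ (A ∪ B) Set.univ
      ≤ perimeter μ A Set.univ + perimeter μ B Set.univ := by
  refine ENNReal.le_of_forall_pos_le_add fun ε hε _ => ?_
  have hε2 : ((ε : ℝ≥0∞) / 2) ≠ 0 := by simp [hε.ne']
  obtain ⟨f, hfl, hft, hfe⟩ := exists_seq_grad_bound
    (show variationOn μ (A.indicator fun _ => (1:ℝ)) Set.univ
        < perimeter μ A Set.univ + (ε : ℝ≥0∞)/2 by
      rw [← perimeter_univ_eq]
      exact ENNReal.lt_add_right hPA hε2)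
  obtain ⟨e, hel, het, hee⟩ := exists_seq_grad_bound
    (show variationOn μ (B.indicator fun _ => (1:ℝ)) Set.univ
        < perimeter μ B Set.univ + (ε : ℝ≥0∞)/2 by
      rw [← perimeter_univ_eq]
      exact ENNReal.lt_add_right hPB hε2)
  have hfc : ∀ i, Continuous (f i) := fun i => (hfl i).continuous'
  have hec : ∀ i, Continuous (e i) := fun i => (hel i).continuous'
  have hshift : ∀ i : ℕ, ∃ c : ℝ, 0 < c ∧ c < 1/(i+1) ∧
      μ {x | f i x - e i x = c} = 0 := fun i =>
    exists_small_shift (fun x => f i x - e i x)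
      ((hfc i).measurable.sub (hec i).measurable) (1/(i+1)) (by positivity)
  choose c hc0 hcr hcnull using hshift
  have hnull : ∀ i, μ {x | f i x = e i x + c i} = 0 := by
    intro i
    have hseteq : {x | f i x = e i x + c i} = {x | f i x - e i x = c i} := by
      ext x
      simp only [Set.mem_setOf_eq]
      constructor <;> intro hx <;> linarith
    rw [hseteq]
    exact hcnull i
  -- the min/max approximating sequences
  set mn : ℕ → X → ℝ := fun i x => min (f i x) (e i x + c i) with hmn
  set mx : ℕ → X → ℝ := fun i x => max (f i x) (e i x + c i) with hmx
  have hmnl : ∀ i, LocLipschitzOn (mn i) Set.univ :=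
    fun i => locLip_min (hfl i) (locLip_add_const (hel i) (c i))
  have hmxl : ∀ i, LocLipschitzOn (mx i) Set.univ :=
    fun i => locLip_max (hfl i) (locLip_add_const (hel i) (c i))
  have hcten : Filter.Tendsto (fun i : ℕ => ENNReal.ofReal (c i)) Filter.atTop (𝓝 0) := by
    have h1 : Filter.Tendsto (fun i : ℕ => (1:ℝ)/(i+1)) Filter.atTop (𝓝 0) :=
      tendsto_one_div_add_atTop_nhds_zero_nat
    have h2 : Filter.Tendsto c Filter.atTop (𝓝 0) :=
      tendsto_of_tendsto_of_tendsto_of_le_of_le tendsto_const_nhds h1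
        (fun i => (hc0 i).le) (fun i => (hcr i).le)
    have := ENNReal.tendsto_ofReal h2
    rwa [ENNReal.ofReal_zero] at this
  -- L¹loc convergence, simultaneously for min and max
  have key_conv : ∀ (q : ℕ → X → ℝ) (T : X → ℝ),
      (∀ i x, |q i x - T x| ≤ |f i x - A.indicator (fun _ => (1:ℝ)) x|
        + |e i x - B.indicator (fun _ => (1:ℝ)) x| + c i) →
      TendstoL1loc μ Set.univ q T := by
    intro q T hptw W' hW1 hW2 hW3
    have hμW' : μ W' ≠ ⊤ := (measure_lt_top_of_compact_closure hball hW2).ne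
    have hbound : ∀ i, (∫⁻ x in W', ENNReal.ofReal |q i x - T x| ∂μ)
        ≤ ((∫⁻ x in W', ENNReal.ofReal |f i x - A.indicator (fun _ => (1:ℝ)) x| ∂μ)
          + ∫⁻ x in W', ENNReal.ofReal |e i x - B.indicator (fun _ => (1:ℝ)) x| ∂μ)
          + ENNReal.ofReal (c i) * μ W' := by
      intro i
      have hptw' : ∀ x, ENNReal.ofReal |q i x - T x|
          ≤ (ENNReal.ofReal |f i x - A.indicator (fun _ => (1:ℝ)) x|
            + ENNReal.ofReal |e i x - B.indicator (fun _ => (1:ℝ)) x|)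
            + ENNReal.ofReal (c i) := by
        intro x
        calc ENNReal.ofReal |q i x - T x|
            ≤ ENNReal.ofReal ((|f i x - A.indicator (fun _ => (1:ℝ)) x|
              + |e i x - B.indicator (fun _ => (1:ℝ)) x|) + c i) := by
              apply ENNReal.ofReal_le_ofReal
              have := hptw i x
              linarith
          _ ≤ ENNReal.ofReal (|f i x - A.indicator (fun _ => (1:ℝ)) x|
              + |e i x - B.indicator (fun _ => (1:ℝ)) x|) + ENNReal.ofReal (c i) :=
              ENNReal.ofReal_add_le
          _ ≤ _ := add_le_add ENNReal.ofReal_add_le le_rfl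
      calc (∫⁻ x in W', ENNReal.ofReal |q i x - T x| ∂μ)
          ≤ ∫⁻ x in W', ((ENNReal.ofReal |f i x - A.indicator (fun _ => (1:ℝ)) x|
            + ENNReal.ofReal |e i x - B.indicator (fun _ => (1:ℝ)) x|)
            + ENNReal.ofReal (c i)) ∂μ := lintegral_mono hptw'
        _ = (∫⁻ x in W', (ENNReal.ofReal |f i x - A.indicator (fun _ => (1:ℝ)) x|
            + ENNReal.ofReal |e i x - B.indicator (fun _ => (1:ℝ)) x|) ∂μ)
            + ∫⁻ _ in W', ENNReal.ofReal (c i) ∂μ := by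
            refine lintegral_add_left ?_ _
            exact (ENNReal.measurable_ofReal.comp
              (((hfc i).measurable.sub (measurable_const.indicator hA)).abs)).add
              (ENNReal.measurable_ofReal.comp
                (((hec i).measurable.sub (measurable_const.indicator hB)).abs))
        _ = ((∫⁻ x in W', ENNReal.ofReal |f i x - A.indicator (fun _ => (1:ℝ)) x| ∂μ)
            + ∫⁻ x in W', ENNReal.ofReal |e i x - B.indicator (fun _ => (1:ℝ)) x| ∂μ)
            + ENNReal.ofReal (c i) * μ W' := by
            have hmf : Measurable
                (fun x => ENNReal.ofReal |f i x - A.indicator (fun _ => (1:ℝ)) x|) :=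
              (((hfc i).measurable.sub (measurable_const.indicator hA)).abs).ennreal_ofReal
            rw [lintegral_add_left hmf, setLIntegral_const]
    have hlim : Filter.Tendsto (fun i =>
        ((∫⁻ x in W', ENNReal.ofReal |f i x - A.indicator (fun _ => (1:ℝ)) x| ∂μ)
          + ∫⁻ x in W', ENNReal.ofReal |e i x - B.indicator (fun _ => (1:ℝ)) x| ∂μ)
          + ENNReal.ofReal (c i) * μ W') Filter.atTop (𝓝 0) := by
      have h1 := (hft W' hW1 hW2 hW3).add (het W' hW1 hW2 hW3)
      rw [add_zero] at h1
      have h2 : Filter.Tendsto (fun i => ENNReal.ofReal (c i) * μ W') Filter.atTop (𝓝 0) := by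
        have := ENNReal.Tendsto.mul_const hcten (Or.inr hμW')
        rwa [zero_mul] at this
      have := h1.add h2
      rwa [add_zero] at this
    exact tendsto_of_tendsto_of_tendsto_of_le_of_le tendsto_const_nhds hlim
      (fun i => zero_le) hbound
  have hmnt : TendstoL1loc μ Set.univ mn ((A ∩ B).indicator fun _ => (1:ℝ)) := by
    refine key_conv mn _ fun i x => ?_
    rw [indicator_inter_min A B x]
    calc |min (f i x) (e i x + c i)
        - min (A.indicator (fun _ => (1:ℝ)) x) (B.indicator (fun _ => (1:ℝ)) x)|
        ≤ |f i x - A.indicator (fun _ => (1:ℝ)) x|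
          + |(e i x + c i) - B.indicator (fun _ => (1:ℝ)) x| :=
          abs_min_sub_min_le_add _ _ _ _
      _ ≤ _ := by
          have h1 : |(e i x + c i) - B.indicator (fun _ => (1:ℝ)) x|
              ≤ |e i x - B.indicator (fun _ => (1:ℝ)) x| + c i := by
            have h2 : (e i x + c i) - B.indicator (fun _ => (1:ℝ)) x
                = (e i x - B.indicator (fun _ => (1:ℝ)) x) + c i := by ring
            rw [h2]
            refine le_trans (abs_add_le _ _) ?_
            rw [abs_of_pos (hc0 i)]
          linarith
  have hmxt : TendstoL1loc μ Set.univ mx ((A ∪ B).indicator fun _ => (1:ℝ)) := by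
    refine key_conv mx _ fun i x => ?_
    rw [indicator_union_max A B x]
    calc |max (f i x) (e i x + c i)
        - max (A.indicator (fun _ => (1:ℝ)) x) (B.indicator (fun _ => (1:ℝ)) x)|
        ≤ |f i x - A.indicator (fun _ => (1:ℝ)) x|
          + |(e i x + c i) - B.indicator (fun _ => (1:ℝ)) x| :=
          abs_max_sub_max_le_add _ _ _ _
      _ ≤ _ := by
          have h1 : |(e i x + c i) - B.indicator (fun _ => (1:ℝ)) x|
              ≤ |e i x - B.indicator (fun _ => (1:ℝ)) x| + c i := by
            have h2 : (e i x + c i) - B.indicator (fun _ => (1:ℝ)) x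
                = (e i x - B.indicator (fun _ => (1:ℝ)) x) + c i := by ring
            rw [h2]
            refine le_trans (abs_add_le _ _) ?_
            rw [abs_of_pos (hc0 i)]
          linarith
  -- energy bounds
  have hbnd : ∀ i, gradEnergy μ (mn i) Set.univ + gradEnergy μ (mx i) Set.univ
      ≤ perimeter μ A Set.univ + perimeter μ B Set.univ + (ε : ℝ≥0∞) := by
    intro i
    have hsm := gradEnergy_min_max_le (μ := μ) (hfc i)
      ((hec i).add continuous_const) (hnull i)
    calc gradEnergy μ (mn i) Set.univ + gradEnergy μ (mx i) Set.univ
        ≤ gradEnergy μ (f i) Set.univ + gradEnergy μ (fun x => e i x + c i) Set.univ := hsm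
      _ = gradEnergy μ (f i) Set.univ + gradEnergy μ (e i) Set.univ := by
          rw [gradEnergy_add_const]
      _ ≤ (perimeter μ A Set.univ + (ε : ℝ≥0∞)/2)
          + (perimeter μ B Set.univ + (ε : ℝ≥0∞)/2) := add_le_add (hfe i).le (hee i).le
      _ = perimeter μ A Set.univ + perimeter μ B Set.univ + (ε : ℝ≥0∞) := by
          rw [add_add_add_comm, ENNReal.add_halves]
  have hCnetop : perimeter μ A Set.univ + perimeter μ B Set.univ + (ε : ℝ≥0∞) ≠ ⊤ := by
    rw [ENNReal.add_ne_top, ENNReal.add_ne_top]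
    exact ⟨⟨hPA, hPB⟩, ENNReal.coe_ne_top⟩
  calc perimeter μ (A ∩ B) Set.univ + perimeter μ (A ∪ B) Set.univ
      ≤ Filter.liminf (fun i => gradEnergy μ (mn i) Set.univ) Filter.atTop
        + Filter.liminf (fun i => gradEnergy μ (mx i) Set.univ) Filter.atTop := by
        refine add_le_add ?_ ?_
        · rw [perimeter_univ_eq]
          exact variationOn_le_seq hmnl hmnt
        · rw [perimeter_univ_eq]
          exact variationOn_le_seq hmxl hmxt
    _ ≤ perimeter μ A Set.univ + perimeter μ B Set.univ + (ε : ℝ≥0∞) :=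
        liminf_add_liminf_le hCnetop hbnd

end Aux6

/-- **Proposition 4.3 (stability).** The union of an increasing sequence of
indecomposable sets is indecomposable, provided it has finite perimeter. -/
theorem indecomposable_of_iUnion_monotone
    [ProperSpace X] (μ : Measure X)
    (hball : ∀ (x : X) (r : ℝ), 0 < r → 0 < μ (ball x r) ∧ μ (ball x r) < ⊤)
    (E : Set X) (hE : MeasurableSet E) (hEfin : perimeter μ E Set.univ < ⊤)
    (En : ℕ → Set X) (hmeas : ∀ n, MeasurableSet (En n))
    (hfin : ∀ n, perimeter μ (En n) Set.univ < ⊤)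
    (hmono : Monotone En)
    (hindec : ∀ n, IsIndecomposableIn μ (En n) Set.univ)
    (hunion : E = ⋃ n, En n) :
    IsIndecomposableIn μ E Set.univ := by
  intro hdec
  obtain ⟨F, G, hFm, hGm, hdisj, hFG, hPF, hPG, hμF, hμG, heq⟩ := hdec
  rw [Set.inter_univ] at hFG
  obtain ⟨x₀, -⟩ := nonempty_of_measure_ne_zero hμF.ne'
  haveI hsf : SigmaFinite μ := by
    refine ⟨⟨⟨fun n => ball x₀ (n+1), fun _ => trivial,
      fun n => (hball x₀ (n+1) (by positivity)).2, ?_⟩⟩⟩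
    refine Set.iUnion_eq_univ_iff.mpr fun y => ⟨⌈dist y x₀⌉₊, ?_⟩
    rw [Metric.mem_ball]
    calc dist y x₀ ≤ ⌈dist y x₀⌉₊ := Nat.le_ceil _
      _ < ⌈dist y x₀⌉₊ + 1 := by linarith
  have hFE : F ⊆ E := by rw [← hFG]; exact Set.subset_union_left
  have hGE : G ⊆ E := by rw [← hFG]; exact Set.subset_union_right
  have hEnE : ∀ k, En k ⊆ E := fun k => by rw [hunion]; exact Set.subset_iUnion En k
  -- choose an index with both pieces of positive measure
  have hlimF : μ F = ⨆ k, μ (F ∩ En k) := by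
    have hkey : (⋃ k, F ∩ En k) = F := by
      rw [← Set.inter_iUnion, ← hunion, Set.inter_eq_self_of_subset_left hFE]
    calc μ F = μ (⋃ k, F ∩ En k) := by rw [hkey]
      _ = ⨆ k, μ (F ∩ En k) := Monotone.measure_iUnion fun k l hkl =>
          Set.inter_subset_inter_right F (hmono hkl)
  have hlimG : μ G = ⨆ k, μ (G ∩ En k) := by
    have hkey : (⋃ k, G ∩ En k) = G := by
      rw [← Set.inter_iUnion, ← hunion, Set.inter_eq_self_of_subset_left hGE]
    calc μ G = μ (⋃ k, G ∩ En k) := by rw [hkey]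
      _ = ⨆ k, μ (G ∩ En k) := Monotone.measure_iUnion fun k l hkl =>
          Set.inter_subset_inter_right G (hmono hkl)
  have h1 : ∃ k, 0 < μ (F ∩ En k) := by
    by_contra hcon
    push_neg at hcon
    refine absurd ?_ hμF.ne'
    rw [hlimF]
    exact iSup_eq_zero.mpr fun k => le_zero_iff.mp (hcon k)
  have h2 : ∃ k, 0 < μ (G ∩ En k) := by
    by_contra hcon
    push_neg at hcon
    refine absurd ?_ hμG.ne'
    rw [hlimG]
    exact iSup_eq_zero.mpr fun k => le_zero_iff.mp (hcon k)
  obtain ⟨n1, hn1⟩ := h1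
  obtain ⟨n2, hn2⟩ := h2
  set n := max n1 n2 with hndef
  have hμA : 0 < μ (F ∩ En n) :=
    lt_of_lt_of_le hn1 (measure_mono (Set.inter_subset_inter_right F (hmono (le_max_left _ _))))
  have hμB : 0 < μ (G ∩ En n) :=
    lt_of_lt_of_le hn2 (measure_mono (Set.inter_subset_inter_right G (hmono (le_max_right _ _))))
  set A := F ∩ En n with hAdef
  set B := G ∩ En n with hBdef
  have hAm : MeasurableSet A := hFm.inter (hmeas n)
  have hBm : MeasurableSet B := hGm.inter (hmeas n)
  have hABdisj : Disjoint A B := hdisj.mono Set.inter_subset_left Set.inter_subset_left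
  have hABunion : A ∪ B = En n := by
    rw [hAdef, hBdef, ← Set.union_inter_distrib_right, hFG,
      Set.inter_eq_self_of_subset_right (hEnE n)]
  -- the three submodularity instances
  have hsub1 := perimeter_submodular hball hFm (hmeas n) hPF.ne (hfin n).ne
  have hsub2 := perimeter_submodular hball hGm (hmeas n) hPG.ne (hfin n).ne
  have hPFEn : perimeter μ (F ∪ En n) Set.univ ≠ ⊤ :=
    ne_top_of_le_ne_top (ENNReal.add_ne_top.mpr ⟨hPF.ne, (hfin n).ne⟩)
      (le_trans le_add_self hsub1)
  have hPGEn : perimeter μ (G ∪ En n) Set.univ ≠ ⊤ :=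
    ne_top_of_le_ne_top (ENNReal.add_ne_top.mpr ⟨hPG.ne, (hfin n).ne⟩)
      (le_trans le_add_self hsub2)
  have hsub3 := perimeter_submodular hball (hFm.union (hmeas n)) (hGm.union (hmeas n))
    hPFEn hPGEn
  have hid1 : (F ∪ En n) ∩ (G ∪ En n) = En n := by
    ext x
    simp only [Set.mem_inter_iff, Set.mem_union]
    constructor
    · rintro ⟨hx1 | hx1, hx2 | hx2⟩
      · exact absurd hx2 (Set.disjoint_left.mp hdisj hx1)
      · exact hx2
      · exact hx1
      · exact hx1
    · intro hx
      exact ⟨Or.inr hx, Or.inr hx⟩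
  have hid2 : (F ∪ En n) ∪ (G ∪ En n) = E := by
    ext x
    simp only [Set.mem_union]
    constructor
    · rintro ((hx | hx) | (hx | hx))
      · exact hFE hx
      · exact hEnE n hx
      · exact hGE hx
      · exact hEnE n hx
    · intro hx
      rw [← hFG] at hx
      rcases hx with hx | hx
      · exact Or.inl (Or.inl hx)
      · exact Or.inr (Or.inl hx)
  rw [hid1, hid2] at hsub3
  have hsub3' : perimeter μ E Set.univ + perimeter μ (En n) Set.univ
      ≤ perimeter μ (F ∪ En n) Set.univ + perimeter μ (G ∪ En n) Set.univ := by
    rwa [add_comm (perimeter μ (En n) Set.univ)] at hsub3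
  -- the key cancellation
  have hS : perimeter μ (F ∪ En n) Set.univ + perimeter μ (G ∪ En n) Set.univ ≠ ⊤ :=
    ENNReal.add_ne_top.mpr ⟨hPFEn, hPGEn⟩
  have halg : perimeter μ A Set.univ + perimeter μ B Set.univ
      ≤ perimeter μ (En n) Set.univ := by
    have hchain : (perimeter μ A Set.univ + perimeter μ B Set.univ)
        + (perimeter μ (F ∪ En n) Set.univ + perimeter μ (G ∪ En n) Set.univ)
        ≤ perimeter μ (En n) Set.univ
          + (perimeter μ (F ∪ En n) Set.univ + perimeter μ (G ∪ En n) Set.univ) := by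
      calc (perimeter μ A Set.univ + perimeter μ B Set.univ)
          + (perimeter μ (F ∪ En n) Set.univ + perimeter μ (G ∪ En n) Set.univ)
          = (perimeter μ A Set.univ + perimeter μ (F ∪ En n) Set.univ)
            + (perimeter μ B Set.univ + perimeter μ (G ∪ En n) Set.univ) := by
            rw [add_add_add_comm]
        _ ≤ (perimeter μ F Set.univ + perimeter μ (En n) Set.univ)
            + (perimeter μ G Set.univ + perimeter μ (En n) Set.univ) :=
            add_le_add hsub1 hsub2
        _ = (perimeter μ F Set.univ + perimeter μ G Set.univ)
            + (perimeter μ (En n) Set.univ + perimeter μ (En n) Set.univ) := by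
            rw [add_add_add_comm]
        _ = (perimeter μ E Set.univ + perimeter μ (En n) Set.univ)
            + perimeter μ (En n) Set.univ := by
            rw [← heq, add_assoc]
        _ ≤ (perimeter μ (F ∪ En n) Set.univ + perimeter μ (G ∪ En n) Set.univ)
            + perimeter μ (En n) Set.univ := add_le_add hsub3' le_rfl
        _ = perimeter μ (En n) Set.univ
            + (perimeter μ (F ∪ En n) Set.univ + perimeter μ (G ∪ En n) Set.univ) :=
            add_comm _ _
    exact (ENNReal.add_le_add_iff_right hS).mp hchain
  have hrev : perimeter μ (En n) Set.univ
      ≤ perimeter μ A Set.univ + perimeter μ B Set.univ := by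
    have := perimeter_union_le_of_disjoint (μ := μ) hAm hBm hABdisj
    rwa [hABunion] at this
  have hPAlt : perimeter μ A Set.univ < ⊤ :=
    lt_of_le_of_lt (le_trans le_self_add halg) (hfin n)
  have hPBlt : perimeter μ B Set.univ < ⊤ :=
    lt_of_le_of_lt (le_trans le_add_self halg) (hfin n)
  exact hindec n ⟨A, B, hAm, hBm, hABdisj, by rw [hABunion, Set.inter_univ],
    hPAlt, hPBlt, hμA, hμB, le_antisymm hrev halg⟩
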